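/- arXiv:2407.07584 — 8 statements merged into one kernel-verified Lean document; each statement's English description precedes it below -/
import Mathlib

section
/- ε-bisimilarity is additive in the tolerances: if s ∼_{ε₁} t and t ∼_{ε₂} u (i.e., there are an ε₁-bisimulation containing (s,t) and an ε₂-bisimulation containing (t,u)), then s ∼_{ε'} u for some ε' with 0 ≤ ε' ≤ min{1, ε₁ + ε₂}; in fact the relational composition (suitably closed under reflexivity and symmetry) of an ε₁-bisimulation and an ε₂-bisimulation is contained in an (ε₁+ε₂)-bisimulation. -/
open scoped BigOperators

attribute [local instance] Classical.propDecidable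

/-- Mass that a (sub)distribution `μ` assigns to a set `A`. -/
noncomputable def pmass {S : Type*} (μ : S → ℝ) (A : Set S) : ℝ := ∑' a : A, μ a

/-- L1-distance between two functions `S → ℝ`. -/
noncomputable def l1dist {S : Type*} (μ ν : S → ℝ) : ℝ := ∑' s, |μ s - ν s|

/-- `μ : S → ℝ` is a probability distribution. -/
def IsDistr {S : Type*} (μ : S → ℝ) : Prop :=
  (∀ s, 0 ≤ μ s) ∧ (∀ s, μ s ≤ 1) ∧ HasSum μ 1

/-- Image of a set under a relation. -/
def relImg {S : Type*} (R : S → S → Prop) (A : Set S) : Set S := {t | ∃ s ∈ A, R s t}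

/-- ε-bisimulation on a labeled Markov chain with transition function `P` and labeling `lab`. -/
def IsEpsBisim {S L : Type*} (P : S → S → ℝ) (lab : S → L) (ε : ℝ)
    (R : S → S → Prop) : Prop :=
  Reflexive R ∧ Symmetric R ∧
    ∀ s t, R s t → lab s = lab t ∧
      ∀ A : Set S, pmass (P s) A ≤ pmass (P t) (relImg R A) + ε

/-- ε-APB (approximate probabilistic bisimulation with precision ε). -/
def IsEpsAPB {S L : Type*} (P : S → S → ℝ) (lab : S → L) (ε : ℝ)
    (R : S → S → Prop) : Prop :=
  Reflexive R ∧ Symmetric R ∧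
    ∀ s t, R s t → lab s = lab t ∧
      ∀ A : Set S, relImg R A ⊆ A → |pmass (P s) A - pmass (P t) A| ≤ ε

/-- Weight of a finite path witnessing `B U A` starting at `s` and continuing along the list. -/
noncomputable def untilWeight {S : Type*} (P : S → S → ℝ) (B A : Set S) :
    S → List S → ℝ
  | s, [] => if s ∈ A then 1 else 0
  | s, t :: rest =>
      if s ∈ A then 0 else if s ∈ B then P s t * untilWeight P B A t rest else 0

/-- `Pr_s(B U A)`: probability of reaching `A` from `s` via states in `B`. -/
noncomputable def untilProb {S : Type*} (P : S → S → ℝ) (B A : Set S) (s : S) : ℝ :=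
  ∑' l : List S, untilWeight P B A s l

/-- `Pr_s(□C)`: probability of staying in `C` forever, `= 1 - Pr_s(C U Cᶜ)`. -/
noncomputable def boxProb {S : Type*} (P : S → S → ℝ) (C : Set S) (s : S) : ℝ :=
  1 - untilProb P C Cᶜ s

/-- Weak ε-bisimulation. -/
def IsWeakEpsBisim {S L : Type*} (P : S → S → ℝ) (lab : S → L) (ε : ℝ)
    (R : S → S → Prop) : Prop :=
  Reflexive R ∧ Symmetric R ∧
    ∀ s t, R s t → lab s = lab t ∧
      ∀ A : Set S, untilProb P {u | lab u = lab s} A s ≤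
        untilProb P {u | lab u = lab t} (relImg R A) t + ε

/-- Weak ε-bisimilarity of two states. -/
def WeakEpsBisimilar {S L : Type*} (P : S → S → ℝ) (lab : S → L) (ε : ℝ)
    (s t : S) : Prop :=
  ∃ R, IsWeakEpsBisim P lab ε R ∧ R s t

/-- Up-to-(n,ε)-bisimilarity. -/
def upTo {S L : Type*} (P : S → S → ℝ) (lab : S → L) (ε : ℝ) :
    ℕ → S → S → Prop
  | 0, _, _ => True
  | n + 1, s, t => lab s = lab t ∧
      ∀ A : Set S,
        pmass (P s) A ≤ pmass (P t) (relImg (upTo P lab ε n) A) + ε ∧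
        pmass (P t) A ≤ pmass (P s) (relImg (upTo P lab ε n) A) + ε

/-- Branching ε-bisimulation. -/
def IsBranchingEpsBisim {S L : Type*} (P : S → S → ℝ) (lab : S → L) (ε : ℝ)
    (R : S → S → Prop) : Prop :=
  Equivalence R ∧
    ∀ s t, R s t → lab s = lab t ∧
      ∀ A : Set S, relImg R A ⊆ A →
        |untilProb P {u | R s u} A s - untilProb P {u | R t u} A t| ≤ ε

/-- Transitive ε-bisimulation (equivalently, an ε-APB which is an equivalence). -/
def IsTransEpsBisim {S L : Type*} (P : S → S → ℝ) (lab : S → L) (ε : ℝ)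
    (R : S → S → Prop) : Prop :=
  Equivalence R ∧
    ∀ s t, R s t → lab s = lab t ∧
      ∀ A : Set S, relImg R A ⊆ A → |pmass (P s) A - pmass (P t) A| ≤ ε

/-- Exact probabilistic bisimulation. -/
def IsExactBisim {S L : Type*} (P : S → S → ℝ) (lab : S → L)
    (R : S → S → Prop) : Prop :=
  Equivalence R ∧
    ∀ s t, R s t → lab s = lab t ∧
      ∀ c, pmass (P s) {u | R c u} = pmass (P t) {u | R c u}

/-- `Pr_s(◇^{≤k} G)`: probability of reaching `G` from `s` within `k` steps. -/
noncomputable def reachLe {S : Type*} (P : S → S → ℝ) (G : Set S) :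
    ℕ → S → ℝ
  | 0, s => if s ∈ G then 1 else 0
  | k + 1, s => if s ∈ G then 1 else ∑' t, P s t * reachLe P G k t

lemma pmass_nonneg' {S : Type*} {μ : S → ℝ} (h0 : ∀ s, 0 ≤ μ s) (A : Set S) :
    0 ≤ pmass μ A := tsum_nonneg fun a => h0 a

lemma pmass_mono' {S : Type*} {μ : S → ℝ} (hs : Summable μ) (h0 : ∀ s, 0 ≤ μ s)
    {A B : Set S} (hAB : A ⊆ B) : pmass μ A ≤ pmass μ B := by
  rw [pmass, pmass, tsum_subtype A μ, tsum_subtype B μ]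
  refine Summable.tsum_le_tsum (fun x => ?_) (hs.indicator A) (hs.indicator B)
  by_cases hx : x ∈ A
  · rw [Set.indicator_of_mem hx, Set.indicator_of_mem (hAB hx)]
  · rw [Set.indicator_of_notMem hx]
    exact Set.indicator_nonneg (fun y _ => h0 y) x

lemma pmass_le_one' {S : Type*} {μ : S → ℝ} (hd : IsDistr μ) (A : Set S) :
    pmass μ A ≤ 1 := by
  have hsum : Summable μ := hd.2.2.summable
  rw [pmass, tsum_subtype A μ]
  calc ∑' x, A.indicator μ x ≤ ∑' x, μ x :=
        Summable.tsum_le_tsum (fun x => by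
          by_cases hx : x ∈ A
          · rw [Set.indicator_of_mem hx]
          · rw [Set.indicator_of_notMem hx]; exact hd.1 x) (hsum.indicator A) hsum
    _ = 1 := hd.2.2.tsum_eq

theorem epsBisim_additive {S L : Type*} [Countable S] [Nonempty S]
    (P : S → S → ℝ) (lab : S → L)
    (hP : ∀ s, IsDistr (P s)) (hfb : ∀ s, (Function.support (P s)).Finite)
    (ε₁ ε₂ : ℝ) (hε₁ : 0 ≤ ε₁) (hε₁' : ε₁ ≤ 1) (hε₂ : 0 ≤ ε₂) (hε₂' : ε₂ ≤ 1)
    (R₁ R₂ : S → S → Prop)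
    (h₁ : IsEpsBisim P lab ε₁ R₁) (h₂ : IsEpsBisim P lab ε₂ R₂)
    (s t u : S) (hst : R₁ s t) (htu : R₂ t u) :
    (∃ R₃ : S → S → Prop, IsEpsBisim P lab (ε₁ + ε₂) R₃ ∧
        ∀ p q : S, (∃ a, R₁ p a ∧ R₂ a q) → R₃ p q) ∧
    (∃ ε' : ℝ, 0 ≤ ε' ∧ ε' ≤ min 1 (ε₁ + ε₂) ∧
        ∃ R : S → S → Prop, IsEpsBisim P lab ε' R ∧ R s u) := by
  classical
  have hsum : ∀ v : S, Summable (P v) := fun v => (hP v).2.2.summable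
  have h0 : ∀ v w, 0 ≤ P v w := fun v => (hP v).1
  set R₃ : S → S → Prop :=
    fun p q => (∃ a, R₁ p a ∧ R₂ a q) ∨ (∃ a, R₂ p a ∧ R₁ a q) with hR₃
  obtain ⟨h₁r, h₁s, h₁m⟩ := h₁
  obtain ⟨h₂r, h₂s, h₂m⟩ := h₂
  have hrefl : Reflexive R₃ := fun p => Or.inl ⟨p, h₁r p, h₂r p⟩
  have hsymm : Symmetric R₃ := by
    rintro p q (⟨a, hpa, haq⟩ | ⟨a, hpa, haq⟩)
    · exact Or.inr ⟨a, h₂s haq, h₁s hpa⟩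
    · exact Or.inl ⟨a, h₁s haq, h₂s hpa⟩
  have hmain : ∀ p q, R₃ p q → lab p = lab q ∧
      ∀ A : Set S, pmass (P p) A ≤ pmass (P q) (relImg R₃ A) + (ε₁ + ε₂) := by
    rintro p q (⟨a, hpa, haq⟩ | ⟨a, hpa, haq⟩)
    · refine ⟨(h₁m p a hpa).1.trans (h₂m a q haq).1, fun A => ?_⟩
      have step1 := (h₁m p a hpa).2 A
      have step2 := (h₂m a q haq).2 (relImg R₁ A)
      have hsub : relImg R₂ (relImg R₁ A) ⊆ relImg R₃ A := by
        rintro z ⟨y, ⟨x, hxA, hxy⟩, hyz⟩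
        exact ⟨x, hxA, Or.inl ⟨y, hxy, hyz⟩⟩
      have := pmass_mono' (hsum q) (h0 q) hsub
      linarith
    · refine ⟨(h₂m p a hpa).1.trans (h₁m a q haq).1, fun A => ?_⟩
      have step1 := (h₂m p a hpa).2 A
      have step2 := (h₁m a q haq).2 (relImg R₂ A)
      have hsub : relImg R₁ (relImg R₂ A) ⊆ relImg R₃ A := by
        rintro z ⟨y, ⟨x, hxA, hxy⟩, hyz⟩
        exact ⟨x, hxA, Or.inr ⟨y, hxy, hyz⟩⟩
      have := pmass_mono' (hsum q) (h0 q) hsub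
      linarith
  refine ⟨⟨R₃, ⟨hrefl, hsymm, hmain⟩, fun p q h => Or.inl h⟩,
    min 1 (ε₁ + ε₂), le_min zero_le_one (by linarith), le_rfl, R₃,
    ⟨hrefl, hsymm, fun p q hpq => ⟨(hmain p q hpq).1, fun A => ?_⟩⟩,
    Or.inl ⟨t, hst, htu⟩⟩
  have h1 : pmass (P p) A ≤ pmass (P q) (relImg R₃ A) + 1 := by
    have := pmass_le_one' (hP p) A
    have := pmass_nonneg' (h0 q) (relImg R₃ A)
    linarith
  have h2 := (hmain p q hpq).2 A
  rcases min_cases 1 (ε₁ + ε₂) with ⟨he, _⟩ | ⟨he, _⟩ <;> rw [he] <;> linarith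
end

section
/- Let R be a reflexive symmetric relation on a finitely branching LMC relating only equally labeled states such that for all (s,t) ∈ R there is a map Δ : Succ(s) → Distr(Succ(t)) with (1) P(t)(t') = Σ_{s'∈Succ(s)} P(s)(s')·Δ(s')(t') for all t' ∈ Succ(t), and (2) Σ_{s'∈Succ(s)} P(s)(s')·Δ(s')(R(s')∩Succ(t)) ≥ 1 − ε. Then R is an ε-bisimulation, i.e., P(s)(A) ≤ P(t)(R(A)) + ε for all (s,t) ∈ R and all A ⊆ S. -/
open scoped BigOperators

attribute [local instance] Classical.propDecidable

theorem epsBisim_of_weightFunction {S L : Type*} [Countable S] [Nonempty S]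
    (P : S → S → ℝ) (lab : S → L)
    (hP : ∀ s, IsDistr (P s)) (hfb : ∀ s, (Function.support (P s)).Finite)
    (ε : ℝ) (R : S → S → Prop)
    (hrefl : Reflexive R) (hsym : Symmetric R)
    (hlab : ∀ s t, R s t → lab s = lab t)
    (hΔ : ∀ s t, R s t → ∃ Δ : S → S → ℝ,
      (∀ s' t', 0 ≤ Δ s' t') ∧
      (∀ s', P s s' ≠ 0 → HasSum (fun t' => Δ s' t') 1) ∧
      (∀ s' t', P s s' ≠ 0 → Δ s' t' ≠ 0 → P t t' ≠ 0) ∧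
      (∀ t', P t t' ≠ 0 → P t t' = ∑' s', P s s' * Δ s' t') ∧
      1 - ε ≤ ∑' s', P s s' * pmass (Δ s') {t' | R s' t' ∧ P t t' ≠ 0}) :
    IsEpsBisim P lab ε R := by
  refine ⟨hrefl, hsym, fun s t hst => ⟨hlab s t hst, fun A => ?_⟩⟩
  obtain ⟨Δ, hΔ0, hΔ1, hΔsupp, hΔ4, hΔ5⟩ := hΔ s t hst
  obtain ⟨hPs0, hPs1, hPsum⟩ := hP s
  obtain ⟨hPt0, hPt1, hPtsum⟩ := hP t
  classical
  set F : Finset S := (hfb s).toFinset with hF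
  have hFmem : ∀ s', s' ∈ F ↔ P s s' ≠ 0 := by
    intro s'; simp [hF, Set.Finite.mem_toFinset, Function.mem_support]
  set good : S → Set S := fun s' => {t' | R s' t' ∧ P t t' ≠ 0} with hgood
  set g : S → ℝ := fun s' => pmass (Δ s') (good s') with hg
  set B : Set S := relImg R A with hB
  have hg0 : ∀ s', 0 ≤ g s' := fun s' => tsum_nonneg fun a => hΔ0 _ _
  have hΔsummable : ∀ s', P s s' ≠ 0 → Summable (Δ s') := fun s' h => (hΔ1 s' h).summable
  have hgsum : ∀ s', g s' = ∑' t', (good s').indicator (Δ s') t' := by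
    intro s'; exact tsum_subtype _ _
  have hg1 : ∀ s', P s s' ≠ 0 → g s' ≤ 1 := by
    intro s' h
    rw [hgsum s']
    calc ∑' t', (good s').indicator (Δ s') t' ≤ ∑' t', Δ s' t' := by
          refine Summable.tsum_le_tsum ?_ ((hΔsummable s' h).indicator _) (hΔsummable s' h)
          intro t'
          exact Set.indicator_le_self' (fun x _ => hΔ0 _ _) t'
      _ = 1 := (hΔ1 s' h).tsum_eq
  set term1 : S → ℝ := fun s' => A.indicator (fun u => P s u * g u) s' with hterm1
  set term2 : S → ℝ := fun s' => P s s' * (1 - g s') with hterm2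
  have hterm1nn : ∀ s', 0 ≤ term1 s' :=
    fun s' => Set.indicator_nonneg (fun u _ => mul_nonneg (hPs0 u) (hg0 u)) s'
  have hterm1zero : ∀ s' ∉ F, term1 s' = 0 := by
    intro s' hs'
    have hz : P s s' = 0 := by by_contra h; exact hs' ((hFmem s').2 h)
    simp [hterm1, Set.indicator_apply, hz]
  have hterm2zero : ∀ s' ∉ F, term2 s' = 0 := by
    intro s' hs'
    have hz : P s s' = 0 := by by_contra h; exact hs' ((hFmem s').2 h)
    simp [hterm2, hz]
  have hsum1 : Summable term1 := summable_of_ne_finset_zero hterm1zero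
  have hsum2 : Summable term2 := summable_of_ne_finset_zero hterm2zero
  -- pointwise bound for step A
  have hpoint : ∀ s', A.indicator (P s) s' ≤ term1 s' + term2 s' := by
    intro s'
    by_cases hA : s' ∈ A
    · simp only [hterm1, hterm2, Set.indicator_of_mem hA]
      ring_nf
      exact le_refl _
    · simp only [hterm1, hterm2, Set.indicator_of_notMem hA, zero_add]
      by_cases hz : P s s' = 0
      · simp [hz]
      · exact mul_nonneg (hPs0 s') (by linarith [hg1 s' hz])
  -- step A: pmass (P s) A ≤ ∑' term1 + ∑' term2
  have hA1 : pmass (P s) A ≤ ∑' s', term1 s' + ∑' s', term2 s' := by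
    have h1 : pmass (P s) A = ∑' s', A.indicator (P s) s' := tsum_subtype _ _
    rw [h1, ← Summable.tsum_add hsum1 hsum2]
    exact Summable.tsum_le_tsum hpoint (hPsum.summable.indicator _) (hsum1.add hsum2)
  -- step term2: ∑' term2 ≤ ε
  have hpg : Summable (fun s' => P s s' * g s') := by
    refine summable_of_ne_finset_zero (s := F) ?_
    intro s' hs'
    have hz : P s s' = 0 := by by_contra h; exact hs' ((hFmem s').2 h)
    simp [hz]
  have hT : 1 - ε ≤ ∑' s', P s s' * g s' := hΔ5
  have hA2 : ∑' s', term2 s' ≤ ε := by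
    have he : term2 = fun s' => P s s' - P s s' * g s' := by
      funext s'; simp only [hterm2]; ring
    rw [he, Summable.tsum_sub hPsum.summable hpg, hPsum.tsum_eq]
    linarith
  -- step B
  set h2 : S → S → ℝ := fun s' t' =>
    if s' ∈ A then P s s' * (good s').indicator (Δ s') t' else 0 with hh2
  have hsummh : ∀ s' ∈ F, Summable (h2 s') := by
    intro s' hs'
    by_cases hA : s' ∈ A
    · simpa [hh2, hA] using ((hΔsummable s' ((hFmem s').1 hs')).indicator _).mul_left (P s s')
    · simp [hh2, hA]
  have hterm1eq : ∀ s' ∈ F, term1 s' = ∑' t', h2 s' t' := by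
    intro s' hs'
    by_cases hA : s' ∈ A
    · simp only [hterm1, hh2, Set.indicator_of_mem hA, if_pos hA]
      rw [tsum_mul_left, ← hgsum s']
    · simp [hterm1, hh2, Set.indicator_of_notMem hA, if_neg hA]
  have hswap : ∑' s', term1 s' = ∑' t', ∑ s' ∈ F, h2 s' t' := by
    rw [tsum_eq_sum hterm1zero, Finset.sum_congr rfl hterm1eq, ← Summable.tsum_finsetSum hsummh]
  have hpointB : ∀ t', ∑ s' ∈ F, h2 s' t' ≤ B.indicator (P t) t' := by
    intro t'
    by_cases hcase : t' ∈ B ∧ P t t' ≠ 0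
    · rw [Set.indicator_of_mem hcase.1]
      have h4 : P t t' = ∑' s', P s s' * Δ s' t' := hΔ4 t' hcase.2
      have hfin : (∑' s', P s s' * Δ s' t') = ∑ s' ∈ F, P s s' * Δ s' t' := by
        refine tsum_eq_sum ?_
        intro s' hs'
        have hz : P s s' = 0 := by by_contra h; exact hs' ((hFmem s').2 h)
        simp [hz]
      rw [h4, hfin]
      refine Finset.sum_le_sum ?_
      intro s' hs'
      by_cases hA : s' ∈ A
      · simp only [hh2, if_pos hA]
        exact mul_le_mul_of_nonneg_left
          (Set.indicator_le_self' (fun x _ => hΔ0 _ _) t') (hPs0 s')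
      · simp only [hh2, if_neg hA]
        exact mul_nonneg (hPs0 s') (hΔ0 s' t')
    · have hz : ∀ s' ∈ F, h2 s' t' = 0 := by
        intro s' hs'
        by_cases hA : s' ∈ A
        · simp only [hh2, if_pos hA]
          by_cases hgd : t' ∈ good s'
          · exact absurd ⟨⟨s', hA, hgd.1⟩, hgd.2⟩ hcase
          · simp [Set.indicator_of_notMem hgd]
        · simp [hh2, hA]
      rw [Finset.sum_eq_zero hz]
      exact Set.indicator_nonneg (fun u _ => hPt0 u) t'
  have hA3 : ∑' s', term1 s' ≤ pmass (P t) B := by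
    rw [hswap]
    have hrhs : pmass (P t) B = ∑' t', B.indicator (P t) t' := tsum_subtype _ _
    rw [hrhs]
    exact Summable.tsum_le_tsum hpointB (summable_sum fun s' hs' => hsummh s' hs')
      (hPtsum.summable.indicator _)
  calc pmass (P s) A ≤ ∑' s', term1 s' + ∑' s', term2 s' := hA1
    _ ≤ pmass (P t) B + ε := add_le_add hA3 hA2
end

section
/- Let M be a finite LMC, ε ∈ [0,1), R a branching ε-bisimulation on M, and C an R-equivalence class. Then either Pr_s(□C) = 0 for all s ∈ C, or Pr_s(□C) ≥ 1 − ε for all s ∈ C. -/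
open scoped BigOperators

attribute [local instance] Classical.propDecidable

section Aux

variable {S : Type*}

lemma uw_nil (P : S → S → ℝ) (B A : Set S) (s : S) :
    untilWeight P B A s [] = if s ∈ A then 1 else 0 := rfl

lemma uw_cons (P : S → S → ℝ) (B A : Set S) (s t : S) (l : List S) :
    untilWeight P B A s (t :: l) =
      if s ∈ A then 0 else if s ∈ B then P s t * untilWeight P B A t l else 0 := rfl

lemma uw_nonneg (P : S → S → ℝ) (hP0 : ∀ s u, 0 ≤ P s u) (B A : Set S) :
    ∀ (l : List S) (s : S), 0 ≤ untilWeight P B A s l := by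
  intro l
  induction l with
  | nil => intro s; rw [uw_nil]; split_ifs <;> norm_num
  | cons t r ih =>
      intro s; rw [uw_cons]; split_ifs
      · exact le_refl 0
      · exact mul_nonneg (hP0 s t) (ih t)
      · exact le_refl 0

lemma sum_P_eq_one [Fintype S] (P : S → S → ℝ) (hP : ∀ s, IsDistr (P s)) (s : S) :
    ∑ t, P s t = 1 :=
  (hasSum_fintype (P s)).unique (hP s).2.2

lemma uw_sum_le_one [Fintype S] [Nonempty S] (P : S → S → ℝ) (hP : ∀ s, IsDistr (P s))
    (B A : Set S) :
    ∀ (n : ℕ) (u : Finset (List S)), (∀ l ∈ u, l.length ≤ n) → ∀ s : S,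
      ∑ l ∈ u, untilWeight P B A s l ≤ 1 := by
  haveI : Inhabited S := Classical.inhabited_of_nonempty ‹_›
  have hP0 : ∀ s u, 0 ≤ P s u := fun s u => (hP s).1 u
  intro n
  induction n with
  | zero =>
      intro u hu s
      have hsub : u ⊆ {([] : List S)} := by
        intro l hl
        have h := Nat.le_zero.1 (hu l hl)
        rw [List.length_eq_zero_iff] at h
        simp [h]
      calc ∑ l ∈ u, untilWeight P B A s l
          ≤ ∑ l ∈ ({[]} : Finset (List S)), untilWeight P B A s l :=
            Finset.sum_le_sum_of_subset_of_nonneg hsub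
              (fun l _ _ => uw_nonneg P hP0 B A l s)
        _ = untilWeight P B A s [] := Finset.sum_singleton _ _
        _ ≤ 1 := by rw [uw_nil]; split_ifs <;> norm_num
  | succ n ih =>
      intro u hu s
      by_cases hsA : s ∈ A
      · calc ∑ l ∈ u, untilWeight P B A s l
            ≤ ∑ l ∈ u, (if l = ([] : List S) then (1:ℝ) else 0) := by
              refine Finset.sum_le_sum fun l _ => ?_
              cases l with
              | nil => rw [uw_nil, if_pos hsA]; simp
              | cons t r => rw [uw_cons, if_pos hsA]; simp
          _ = if ([] : List S) ∈ u then (1:ℝ) else 0 := Finset.sum_ite_eq' u _ _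
          _ ≤ 1 := by split_ifs <;> norm_num
      · by_cases hsB : s ∈ B
        · have h0 : untilWeight P B A s [] = 0 := by rw [uw_nil, if_neg hsA]
          rw [← Finset.sum_erase u h0]
          set u' := u.erase ([] : List S) with hu'def
          have hne : ∀ l ∈ u', l ≠ [] := fun l hl => Finset.ne_of_mem_erase hl
          have hinj : ∀ l₁ ∈ u', ∀ l₂ ∈ u',
              (fun l : List S => (l.headI, l.tail)) l₁ =
              (fun l : List S => (l.headI, l.tail)) l₂ → l₁ = l₂ := by
            intro l₁ h₁ l₂ h₂ he
            cases l₁ with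
            | nil => exact absurd rfl (hne _ h₁)
            | cons a r =>
              cases l₂ with
              | nil => exact absurd rfl (hne _ h₂)
              | cons b q => simpa using he
          set v := u'.image (fun l : List S => (l.headI, l.tail)) with hvdef
          have key : ∑ l ∈ u', untilWeight P B A s l
              = ∑ p ∈ v, P s p.1 * untilWeight P B A p.1 p.2 := by
            rw [hvdef, Finset.sum_image hinj]
            refine Finset.sum_congr rfl fun l hl => ?_
            cases l with
            | nil => exact absurd rfl (hne _ hl)
            | cons a r => rw [uw_cons, if_neg hsA, if_pos hsB]; rfl
          rw [key]
          have hlen : ∀ p ∈ v, (p.2 : List S).length ≤ n := by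
            intro p hp
            obtain ⟨l, hl, rfl⟩ := Finset.mem_image.1 hp
            have h1 := hu l (Finset.mem_of_mem_erase hl)
            cases l with
            | nil => exact absurd rfl (hne _ hl)
            | cons a r => simpa using Nat.lt_succ_iff.mp (Nat.lt_of_lt_of_le (Nat.lt_succ_self _) h1)
          calc ∑ p ∈ v, P s p.1 * untilWeight P B A p.1 p.2
              = ∑ t : S, ∑ p ∈ v with p.1 = t, P s p.1 * untilWeight P B A p.1 p.2 :=
                (Finset.sum_fiberwise v Prod.fst _).symm
            _ ≤ ∑ t : S, P s t * 1 := by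
                refine Finset.sum_le_sum fun t _ => ?_
                have hcongr : ∑ p ∈ v with p.1 = t, P s p.1 * untilWeight P B A p.1 p.2
                    = P s t * ∑ p ∈ v with p.1 = t, untilWeight P B A t p.2 := by
                  rw [Finset.mul_sum]
                  refine Finset.sum_congr rfl fun p hp => ?_
                  rw [(Finset.mem_filter.1 hp).2]
                rw [hcongr]
                refine mul_le_mul_of_nonneg_left ?_ (hP0 s t)
                have hinj2 : ∀ p₁ ∈ v.filter (fun p => p.1 = t), ∀ p₂ ∈ v.filter (fun p => p.1 = t),
                    Prod.snd p₁ = Prod.snd p₂ → p₁ = p₂ := by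
                  intro p₁ h₁ p₂ h₂ he
                  have e₁ := (Finset.mem_filter.1 h₁).2
                  have e₂ := (Finset.mem_filter.1 h₂).2
                  exact Prod.ext (e₁.trans e₂.symm) he
                have him : ∑ r ∈ (v.filter (fun p => p.1 = t)).image Prod.snd,
                    untilWeight P B A t r
                    = ∑ p ∈ v.filter (fun p => p.1 = t), untilWeight P B A t p.2 :=
                  Finset.sum_image hinj2
                rw [← him]
                refine ih _ ?_ t
                intro r hr
                obtain ⟨p, hp, rfl⟩ := Finset.mem_image.1 hr
                exact hlen p (Finset.mem_filter.1 hp).1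
            _ = 1 := by rw [← Finset.sum_mul, sum_P_eq_one P hP s, one_mul]
        · have : ∀ l ∈ u, untilWeight P B A s l = 0 := by
            intro l _
            cases l with
            | nil => rw [uw_nil, if_neg hsA]
            | cons a r => rw [uw_cons, if_neg hsA, if_neg hsB]
          rw [Finset.sum_congr rfl this]
          simp

lemma uw_summable [Fintype S] [Nonempty S] (P : S → S → ℝ) (hP : ∀ s, IsDistr (P s))
    (B A : Set S) (s : S) : Summable (untilWeight P B A s) :=
  summable_of_sum_le (fun l => uw_nonneg P (fun s' u => (hP s').1 u) B A l s)
    (fun u => uw_sum_le_one P hP B A (u.sup List.length) u (fun l hl => Finset.le_sup hl) s)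

lemma untilProb_nonneg (P : S → S → ℝ) (hP : ∀ s, IsDistr (P s)) (B A : Set S) (s : S) :
    0 ≤ untilProb P B A s :=
  tsum_nonneg (fun l => uw_nonneg P (fun s' u => (hP s').1 u) B A l s)

lemma untilProb_le_one [Fintype S] [Nonempty S] (P : S → S → ℝ) (hP : ∀ s, IsDistr (P s))
    (B A : Set S) (s : S) : untilProb P B A s ≤ 1 :=
  Summable.tsum_le_of_sum_le (uw_summable P hP B A s)
    (fun u => uw_sum_le_one P hP B A (u.sup List.length) u (fun l hl => Finset.le_sup hl) s)

lemma untilProb_of_mem (P : S → S → ℝ) (B A : Set S) (s : S) (hsA : s ∈ A) :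
    untilProb P B A s = 1 := by
  rw [untilProb, tsum_eq_single ([] : List S)]
  · rw [uw_nil, if_pos hsA]
  · intro l hl
    cases l with
    | nil => exact absurd rfl hl
    | cons a r => rw [uw_cons, if_pos hsA]

lemma untilProb_rec [Fintype S] [Nonempty S] (P : S → S → ℝ) (hP : ∀ s, IsDistr (P s))
    (B A : Set S) (s : S) (hsA : s ∉ A) (hsB : s ∈ B) :
    untilProb P B A s = ∑ t, P s t * untilProb P B A t := by
  have hinj : Function.Injective (fun p : S × List S => p.1 :: p.2) := by
    intro p q h
    cases p; cases q
    simpa [Prod.ext_iff] using h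
  have hgsum : Summable (fun p : S × List S => untilWeight P B A s (p.1 :: p.2)) :=
    (uw_summable P hP B A s).comp_injective hinj
  have h1 : untilProb P B A s = ∑' p : S × List S, untilWeight P B A s (p.1 :: p.2) := by
    refine tsum_eq_tsum_of_ne_zero_bij (fun p => p.1.1 :: p.1.2) ?_ ?_ ?_
    · intro p q h
      exact Subtype.ext (hinj h)
    · intro l hl
      cases l with
      | nil =>
          exfalso; apply hl
          rw [uw_nil, if_neg hsA]
      | cons a r => exact ⟨⟨(a, r), hl⟩, rfl⟩
    · intro p; rfl
  have hfib : ∀ t : S, Summable (fun r : List S => untilWeight P B A s (t :: r)) := by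
    intro t
    have : (fun r : List S => untilWeight P B A s (t :: r))
        = fun r => P s t * untilWeight P B A t r := by
      funext r; rw [uw_cons, if_neg hsA, if_pos hsB]
    rw [this]
    exact (uw_summable P hP B A t).mul_left (P s t)
  rw [h1, Summable.tsum_prod' hgsum hfib, tsum_fintype]
  refine Finset.sum_congr rfl fun t _ => ?_
  have : (fun r : List S => untilWeight P B A s (t :: r))
      = fun r => P s t * untilWeight P B A t r := by
    funext r; rw [uw_cons, if_neg hsA, if_pos hsB]
  rw [this, tsum_mul_left]
  rfl

end Aux

theorem branching_box_dichotomy {S L : Type*} [Fintype S] [Nonempty S]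
    (P : S → S → ℝ) (lab : S → L)
    (hP : ∀ s, IsDistr (P s)) (ε : ℝ) (hε0 : 0 ≤ ε) (hε1 : ε < 1)
    (R : S → S → Prop) (hR : IsBranchingEpsBisim P lab ε R) (c : S) :
    (∀ s, R c s → boxProb P {u | R c u} s = 0) ∨
    (∀ s, R c s → 1 - ε ≤ boxProb P {u | R c u} s) := by
  obtain ⟨hEq, hBis⟩ := hR
  set C : Set S := {u | R c u} with hCdef
  have hP0 : ∀ s u, 0 ≤ P s u := fun s u => (hP s).1 u
  have hClassEq : ∀ s, R c s → {u | R s u} = C := by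
    intro s hs; ext u
    exact ⟨fun h => hEq.trans hs h, fun h => hEq.trans (hEq.symm hs) h⟩
  have hCclosed : relImg R Cᶜ ⊆ Cᶜ := by
    rintro x ⟨y, hy, hyx⟩ hx
    exact hy (hEq.trans hx (hEq.symm hyx))
  have hbox_nonneg : ∀ s, 0 ≤ boxProb P C s := fun s =>
    sub_nonneg.2 (untilProb_le_one P hP C Cᶜ s)
  have hbox_notin : ∀ s, s ∉ C → boxProb P C s = 0 := by
    intro s hs
    rw [boxProb, untilProb_of_mem P C Cᶜ s hs, sub_self]
  have hrec : ∀ s, s ∈ C → boxProb P C s = ∑ t, P s t * boxProb P C t := by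
    intro s hs
    have hsA : s ∉ Cᶜ := fun h => h hs
    rw [boxProb, untilProb_rec P hP C Cᶜ s hsA hs]
    have h2 : ∑ t, P s t * boxProb P C t
        = ∑ t, (P s t - P s t * untilProb P C Cᶜ t) := by
      refine Finset.sum_congr rfl fun t _ => ?_
      rw [boxProb]; ring
    rw [h2, Finset.sum_sub_distrib, sum_P_eq_one P hP s]
  obtain ⟨t0, -, ht0max⟩ := Finset.exists_max_image Finset.univ (boxProb P C)
    Finset.univ_nonempty
  by_cases hm : boxProb P C t0 ≤ 0
  · left
    intro s _
    exact le_antisymm (le_trans (ht0max s (Finset.mem_univ s)) hm) (hbox_nonneg s)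
  · right
    push_neg at hm
    have hmemC : ∀ t, boxProb P C t = boxProb P C t0 → t ∈ C := by
      intro t ht
      by_contra h
      rw [hbox_notin t h] at ht
      exact hm.ne ht
    have hclosed : ∀ t, boxProb P C t = boxProb P C t0 →
        ∀ u, P t u ≠ 0 → boxProb P C u = boxProb P C t0 := by
      intro t ht u hPu
      have htC : t ∈ C := hmemC t ht
      have h1 : ∑ u, P t u * (boxProb P C t0 - boxProb P C u) = 0 := by
        have hr := hrec t htC
        rw [ht] at hr
        have h2 : boxProb P C t0 = ∑ u, P t u * boxProb P C t0 := by
          rw [← Finset.sum_mul, sum_P_eq_one P hP t, one_mul]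
        calc ∑ u, P t u * (boxProb P C t0 - boxProb P C u)
            = ∑ u, (P t u * boxProb P C t0 - P t u * boxProb P C u) := by
              refine Finset.sum_congr rfl fun u _ => ?_; ring
          _ = ∑ u, P t u * boxProb P C t0 - ∑ u, P t u * boxProb P C u :=
              Finset.sum_sub_distrib _ _
          _ = 0 := by rw [← h2, ← hr, sub_self]
      have h3 := (Finset.sum_eq_zero_iff_of_nonneg (fun u _ =>
        mul_nonneg (hP0 t u) (sub_nonneg.2 (ht0max u (Finset.mem_univ u))))).1 h1
        u (Finset.mem_univ u)
      rcases mul_eq_zero.1 h3 with h | h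
      · exact absurd h hPu
      · linarith [sub_eq_zero.1 h]
    have hW0 : ∀ (l : List S) (t : S), boxProb P C t = boxProb P C t0 →
        untilWeight P C Cᶜ t l = 0 := by
      intro l
      induction l with
      | nil =>
          intro t ht
          rw [uw_nil, if_neg (fun h => h (hmemC t ht))]
      | cons u r ih =>
          intro t ht
          rw [uw_cons, if_neg (fun h => h (hmemC t ht)), if_pos (hmemC t ht)]
          by_cases hPu : P t u = 0
          · rw [hPu, zero_mul]
          · rw [ih u (hclosed t ht u hPu), mul_zero]
    have hU0 : untilProb P C Cᶜ t0 = 0 := by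
      rw [untilProb]
      calc ∑' l : List S, untilWeight P C Cᶜ t0 l
          = ∑' _ : List S, (0:ℝ) := tsum_congr (fun l => hW0 l t0 rfl)
        _ = 0 := tsum_zero
    intro s hs
    have ht0C : t0 ∈ C := hmemC t0 rfl
    have hRst0 : R s t0 := hEq.trans (hEq.symm hs) ht0C
    have hb := (hBis s t0 hRst0).2 Cᶜ hCclosed
    rw [hClassEq s hs, hClassEq t0 ht0C, hU0, sub_zero] at hb
    have h4 := (abs_le.1 hb).2
    rw [boxProb]
    linarith
end

section
/- If s ≈^w_ε t in an LMC and b = l(s) = l(t), then |Pr_s(□b) − Pr_t(□b)| ≤ ε, where Pr_s(□b) is the probability that the path from s only ever visits states labeled b. -/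
open scoped BigOperators

attribute [local instance] Classical.propDecidable

theorem weak_box_bound {S L : Type*} [Countable S] [Nonempty S]
    (P : S → S → ℝ) (lab : S → L)
    (hP : ∀ s, IsDistr (P s)) (hfb : ∀ s, (Function.support (P s)).Finite)
    (ε : ℝ) (s t : S) (hst : WeakEpsBisimilar P lab ε s t)
    (b : L) (hbs : lab s = b) (hbt : lab t = b) :
    |boxProb P {u | lab u = b} s - boxProb P {u | lab u = b} t| ≤ ε := by
  obtain ⟨R, ⟨hrefl, hsym, h⟩, hRst⟩ := hst
  have himg : relImg R {u | lab u = b}ᶜ = {u | lab u = b}ᶜ := by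
    ext v
    constructor
    · rintro ⟨u, hu, huv⟩
      have hl := (h u v huv).1
      simpa [Set.mem_compl_iff, Set.mem_setOf_eq, ← hl] using hu
    · intro hv; exact ⟨v, hv, hrefl v⟩
  have h1 := (h s t hRst).2 {u | lab u = b}ᶜ
  have h2 := (h t s (hsym hRst)).2 {u | lab u = b}ᶜ
  rw [hbs, hbt, himg] at h1 h2
  simp only [boxProb]
  rw [abs_le]
  constructor <;> linarith
end

section
/- In an LMC with no stutter steps, i.e., P(s)(L(s)) = 0 for all s ∈ S, an equivalence R relating only equally labeled states is a branching ε-bisimulation if and only if it is a transitive ε-bisimulation (equivalently, an ε-APB that is an equivalence); consequently ∼^*_ε = ≈^b_ε. -/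
open scoped BigOperators

attribute [local instance] Classical.propDecidable

section Aux

variable {S : Type*}

lemma pmass_eq_indicator (μ : S → ℝ) (A : Set S) :
    pmass μ A = ∑' x, A.indicator μ x := tsum_subtype A μ

lemma pmass_diff (μ : S → ℝ) (A C : Set S)
    (h : ∀ a ∈ C, μ a = 0) : pmass μ A = pmass μ (A \ C) := by
  rw [pmass_eq_indicator, pmass_eq_indicator]
  congr 1; funext x
  by_cases hxC : x ∈ C
  · by_cases hxA : x ∈ A <;>
      simp [Set.indicator, hxA, hxC, h x hxC]
  · by_cases hxA : x ∈ A <;>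
      simp [Set.indicator, hxA, hxC]

lemma untilProb_eq (P : S → S → ℝ) (B A : Set S) (s : S)
    (hsB : s ∈ B) (hz : ∀ t ∈ B, P s t = 0) :
    untilProb P B A s = if s ∈ A then 1 else pmass (P s) A := by
  by_cases hsA : s ∈ A
  · simp only [hsA, if_true, untilProb]
    rw [tsum_eq_single ([] : List S)]
    · simp [untilWeight, hsA]
    · intro l hl
      cases l with
      | nil => exact absurd rfl hl
      | cons t rest => simp [untilWeight, hsA]
  · simp only [hsA, if_false, untilProb, pmass]
    apply tsum_eq_tsum_of_ne_zero_bij (g := fun a : ↑A => P s ↑a) (fun x => [x.1.1])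
    · intro x y hxy
      ext
      exact List.head_eq_of_cons_eq hxy
    · rintro l hl
      simp only [Function.mem_support] at hl
      cases l with
      | nil => simp [untilWeight, hsA] at hl
      | cons t rest =>
        simp only [untilWeight, hsA, if_false, hsB, if_true] at hl
        have hPt : P s t ≠ 0 := fun h => hl (by rw [h, zero_mul])
        have htB : t ∉ B := fun h => hPt (hz t h)
        have hrest : rest = [] ∧ t ∈ A := by
          cases rest with
          | nil =>
            refine ⟨rfl, ?_⟩
            by_contra htA
            simp [untilWeight, htA, mul_zero] at hl
          | cons u r =>
            exfalso
            by_cases htA : t ∈ A <;>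
              simp [untilWeight, htA, htB, mul_zero] at hl
        obtain ⟨rfl, htA⟩ := hrest
        exact ⟨⟨⟨t, htA⟩, by simpa [Function.mem_support] using hPt⟩, rfl⟩
    · rintro ⟨⟨t, htA⟩, hts⟩
      simp only [Function.mem_support] at hts
      have htB : t ∉ B := fun h => hts (hz t h)
      simp [untilWeight, hsA, hsB, htA]

end Aux

theorem noStutter_branching_eq_transEpsBisim {S L : Type*} [Countable S] [Nonempty S]
    (P : S → S → ℝ) (lab : S → L)
    (hP : ∀ s, IsDistr (P s)) (hfb : ∀ s, (Function.support (P s)).Finite)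
    (ε : ℝ)
    (hns : ∀ s, pmass (P s) {u | lab u = lab s} = 0) :
    (∀ R : S → S → Prop, IsBranchingEpsBisim P lab ε R ↔ IsTransEpsBisim P lab ε R) ∧
    (∀ s t : S, (∃ R, IsBranchingEpsBisim P lab ε R ∧ R s t) ↔
        (∃ R, IsTransEpsBisim P lab ε R ∧ R s t)) := by
  -- no stutter: P s u = 0 whenever lab u = lab s
  have hzero : ∀ s u, lab u = lab s → P s u = 0 := by
    intro s u hu
    have hsum : Summable (fun x : {u | lab u = lab s} => P s x.1) :=
      (hP s).2.2.summable.subtype _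
    have hle : P s u ≤ pmass (P s) {u | lab u = lab s} := by
      have := Summable.le_tsum hsum ⟨u, hu⟩ (fun j _ => (hP s).1 j.1)
      simpa [pmass] using this
    have hge : 0 ≤ P s u := (hP s).1 u
    rw [hns s] at hle
    linarith
  have main : ∀ R : S → S → Prop, IsBranchingEpsBisim P lab ε R ↔ IsTransEpsBisim P lab ε R := by
    intro R
    constructor
    · rintro ⟨hEq, hc⟩
      refine ⟨hEq, fun s t hst => ⟨(hc s t hst).1, fun A hA => ?_⟩⟩
      -- P s and P t vanish on C := class of s
      set C : Set S := {u | R s u} with hC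
      have hPsC : ∀ a ∈ C, P s a = 0 := fun a ha =>
        hzero s a ((hc s a ha).1).symm
      have hPtC : ∀ a ∈ C, P t a = 0 := fun a ha =>
        hzero t a ((hc t a (hEq.trans (hEq.symm hst) ha)).1).symm
      have hA' : relImg R (A \ C) ⊆ A \ C := by
        rintro v ⟨u, ⟨huA, huC⟩, huv⟩
        refine ⟨hA ⟨u, huA, huv⟩, fun hv => huC (hEq.trans hv (hEq.symm huv))⟩
      have hbr := (hc s t hst).2 (A \ C) hA'
      have hCt : {u | R t u} = C := by
        ext u; exact ⟨fun h => hEq.trans hst h, fun h => hEq.trans (hEq.symm hst) h⟩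
      rw [hCt] at hbr
      have hus : untilProb P C (A \ C) s = pmass (P s) (A \ C) := by
        rw [untilProb_eq P C (A \ C) s (hEq.refl s) hPsC]
        have : s ∉ A \ C := fun h => h.2 (hEq.refl s)
        simp [this]
      have hut : untilProb P C (A \ C) t = pmass (P t) (A \ C) := by
        rw [untilProb_eq P C (A \ C) t hst hPtC]
        have : t ∉ A \ C := fun h => h.2 hst
        simp [this]
      rw [hus, hut, ← pmass_diff (P s) A C hPsC, ← pmass_diff (P t) A C hPtC] at hbr
      exact hbr
    · rintro ⟨hEq, hc⟩
      have heps : 0 ≤ ε := by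
        rcases ‹Nonempty S› with ⟨s⟩
        have := (hc s s (hEq.refl s)).2 Set.univ (fun v _ => trivial)
        simpa using this
      refine ⟨hEq, fun s t hst => ⟨(hc s t hst).1, fun A hA => ?_⟩⟩
      have hPsC : ∀ a ∈ {u | R s u}, P s a = 0 := fun a ha =>
        hzero s a ((hc s a ha).1).symm
      have hPtC : ∀ a ∈ {u | R t u}, P t a = 0 := fun a ha =>
        hzero t a ((hc t a ha).1).symm
      rw [untilProb_eq P {u | R s u} A s (hEq.refl s) hPsC, untilProb_eq P {u | R t u} A t (hEq.refl t) hPtC]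
      have hiff : s ∈ A ↔ t ∈ A :=
        ⟨fun h => hA ⟨s, h, hst⟩, fun h => hA ⟨t, h, hEq.symm hst⟩⟩
      by_cases hsA : s ∈ A
      · have htA : t ∈ A := hiff.1 hsA
        simp [hsA, htA, heps]
      · have htA : t ∉ A := fun h => hsA (hiff.2 h)
        simp only [hsA, htA, if_false]
        exact (hc s t hst).2 A hA
  exact ⟨main, fun s t =>
    ⟨fun ⟨R, hR, hst⟩ => ⟨R, (main R).1 hR, hst⟩,
     fun ⟨R, hR, hst⟩ => ⟨R, (main R).2 hR, hst⟩⟩⟩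
end

section
/- If two finite LMCs M and N are ε-perturbed bisimilar (M ≃_ε N, i.e., there exist ε-perturbations M' of M and N' of N with M' ∼ N'), then M ∼^*_ε N: the bisimilarity relation ∼' of M' ⊕ N' is a transitive ε-bisimulation on M ⊕ N relating the initial states. -/
open scoped BigOperators

attribute [local instance] Classical.propDecidable

lemma pmass_fin {S : Type*} [Fintype S] (μ : S → ℝ) (A : Set S) :
    pmass μ A = ∑ a : S, if a ∈ A then μ a else 0 := by
  classical
  rw [pmass, tsum_subtype, tsum_fintype]
  simp [Set.indicator_apply]

lemma sum_subtype_ite {S : Type*} [Fintype S] (p : S → Prop) [DecidablePred p]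
    (f : S → ℝ) :
    (∑ a : {a // p a}, f (a : S)) = ∑ a : S, if p a then f a else 0 := by
  rw [← Finset.sum_filter]
  exact (Finset.sum_subtype (Finset.univ.filter p) (fun x => by simp) f).symm

theorem perturbed_bisim_implies_transEpsBisim {S L : Type*} [Fintype S] [Nonempty S]
    (P P' : S → S → ℝ) (lab : S → L)
    (hP : ∀ s, IsDistr (P s)) (hP' : ∀ s, IsDistr (P' s))
    (ε : ℝ) (hpert : ∀ s, l1dist (P s) (P' s) ≤ ε)
    (R : S → S → Prop) (hR : IsExactBisim P' lab R)
    (s0 t0 : S) (h0 : R s0 t0) :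
    IsTransEpsBisim P lab ε R ∧ R s0 t0 := by
  classical
  obtain ⟨hEq, hExact⟩ := hR
  refine ⟨⟨hEq, ?_⟩, h0⟩
  intro s t hst
  refine ⟨(hExact s t hst).1, ?_⟩
  intro A hA
  -- Step 1: perturbation bound
  have key1 : ∀ u : S, |pmass (P u) A - pmass (P' u) A| ≤ ε / 2 := by
    intro u
    set d : S → ℝ := fun a => P u a - P' u a with hd
    have hsum1 : ∑ a : S, P u a = 1 := by
      have := (hP u).2.2.tsum_eq; rwa [tsum_fintype] at this
    have hsum2 : ∑ a : S, P' u a = 1 := by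
      have := (hP' u).2.2.tsum_eq; rwa [tsum_fintype] at this
    have hdz : ∑ a : S, d a = 0 := by
      simp only [hd, Finset.sum_sub_distrib, hsum1, hsum2]; ring
    have hl1 : ∑ a : S, |d a| ≤ ε := by
      have := hpert u
      rwa [l1dist, tsum_fintype] at this
    set SA : ℝ := ∑ a : S, if a ∈ A then d a else 0 with hSA
    set SC : ℝ := ∑ a : S, if a ∈ A then 0 else d a with hSC
    have hAC : SA + SC = 0 := by
      have h' : SA + SC = ∑ a : S, d a := by
        rw [hSA, hSC, ← Finset.sum_add_distrib]
        apply Finset.sum_congr rfl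
        intro a _
        by_cases h : a ∈ A <;> simp [h]
      rw [h', hdz]
    have hdiff : pmass (P u) A - pmass (P' u) A = SA := by
      rw [pmass_fin, pmass_fin, hSA, ← Finset.sum_sub_distrib]
      apply Finset.sum_congr rfl
      intro a _
      by_cases h : a ∈ A <;> simp [h, hd]
    have hb1 : |SA| ≤ ∑ a : S, if a ∈ A then |d a| else 0 := by
      refine le_trans (Finset.abs_sum_le_sum_abs _ _) ?_
      apply Finset.sum_le_sum
      intro a _
      by_cases h : a ∈ A <;> simp [h]
    have hb2 : |SC| ≤ ∑ a : S, if a ∈ A then 0 else |d a| := by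
      refine le_trans (Finset.abs_sum_le_sum_abs _ _) ?_
      apply Finset.sum_le_sum
      intro a _
      by_cases h : a ∈ A <;> simp [h]
    have hCA : |SC| = |SA| := by
      have : SC = -SA := by linarith
      rw [this, abs_neg]
    have hsplit : (∑ a : S, if a ∈ A then |d a| else 0)
        + (∑ a : S, if a ∈ A then 0 else |d a|) = ∑ a : S, |d a| := by
      rw [← Finset.sum_add_distrib]
      apply Finset.sum_congr rfl
      intro a _
      by_cases h : a ∈ A <;> simp [h]
    rw [hdiff]
    have : |SA| + |SA| ≤ ε := by
      calc |SA| + |SA| = |SA| + |SC| := by rw [hCA]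
        _ ≤ _ + _ := add_le_add hb1 hb2
        _ = ∑ a : S, |d a| := hsplit
        _ ≤ ε := hl1
    linarith
  -- Step 2: exact equality for P'
  have key2 : pmass (P' s) A = pmass (P' t) A := by
    have hclass : ∀ c, pmass (P' s) {u | R c u} = pmass (P' t) {u | R c u} :=
      (hExact s t hst).2
    set st : Setoid S := ⟨R, hEq⟩ with hst'
    haveI : Fintype (Quotient st) := Fintype.ofFinite _
    have hinner : ∀ (ν : S → ℝ) (c : S),
        (∑ a : {a // Quotient.mk st a = Quotient.mk st c},
            (if (a : S) ∈ A then ν a else 0))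
          = if c ∈ A then pmass ν {u | R c u} else 0 := by
      intro ν c
      have hmem : ∀ a : S, (Quotient.mk st a = Quotient.mk st c) ↔ R c a := by
        intro a
        rw [Quotient.eq]
        exact ⟨fun h => hEq.symm h, fun h => hEq.symm h⟩
      have hconv : (∑ a : {a // Quotient.mk st a = Quotient.mk st c},
          (if (a : S) ∈ A then ν a else 0))
          = ∑ a : S, if Quotient.mk st a = Quotient.mk st c then
              (if a ∈ A then ν a else 0) else 0 :=
        sum_subtype_ite (fun a => Quotient.mk st a = Quotient.mk st c)
          (fun a => if a ∈ A then ν a else 0)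
      rw [hconv]
      by_cases hc : c ∈ A
      · rw [if_pos hc, pmass_fin]
        apply Finset.sum_congr rfl
        intro a _
        by_cases hra : R c a
        · have haA : a ∈ A := hA ⟨c, hc, hra⟩
          simp [hmem, hra, haA, Set.mem_setOf_eq]
        · simp [hmem, hra, Set.mem_setOf_eq]
      · rw [if_neg hc]
        apply Finset.sum_eq_zero
        intro a _
        by_cases hra : R c a
        · have haA : a ∉ A := fun h => hc (hA ⟨a, h, hEq.symm hra⟩)
          simp [hmem, hra, haA]
        · simp [hmem, hra]
    have hdecomp : ∀ (ν : S → ℝ),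
        pmass ν A = ∑ q : Quotient st,
          (Quotient.liftOn q (fun c => if c ∈ A then pmass ν {u | R c u} else 0)
            (by
              intro a b hab
              have h1 : a ∈ A ↔ b ∈ A := by
                constructor
                · intro h; exact hA ⟨a, h, hab⟩
                · intro h; exact hA ⟨b, h, hEq.symm hab⟩
              have h2 : {u | R a u} = {u | R b u} := by
                ext u
                exact ⟨fun h => hEq.trans (hEq.symm hab) h,
                       fun h => hEq.trans hab h⟩
              rw [h1, h2])) := by
      intro ν
      rw [pmass_fin]
      rw [← Fintype.sum_fiberwise (fun a => Quotient.mk st a)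
            (fun a => if a ∈ A then ν a else 0)]
      apply Finset.sum_congr rfl
      intro q _
      induction q using Quotient.ind with
      | _ c => exact hinner ν c
    rw [hdecomp (P' s), hdecomp (P' t)]
    apply Finset.sum_congr rfl
    intro q _
    induction q using Quotient.ind with
    | _ c =>
      simp only [Quotient.liftOn_mk]
      by_cases hc : c ∈ A
      · rw [if_pos hc, if_pos hc, hclass]
      · rw [if_neg hc, if_neg hc]
  have h1 := abs_le.mp (key1 s)
  have h2 := abs_le.mp (key1 t)
  rw [abs_le]
  constructor <;> linarith
end

section
/- Let s ∼_ε t in a finitely branching LMC in which some states are labeled g and exactly the states that cannot reach a g-labeled state are labeled f. Then for all k ∈ ℕ: |Pr_s(◇^{≤k} g) − Pr_t(◇^{≤k} g)| ≤ ε · Σ_{i=1}^{k} Pr_s(N ≥ i), where N is the random variable counting the number of steps until a g- or f-labeled state is reached. Consequently |Pr_s(◇ g) − Pr_t(◇ g)| ≤ ε · 𝔼_s(N). -/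
open scoped BigOperators

attribute [local instance] Classical.propDecidable

set_option maxHeartbeats 1600000

namespace URB

section Helpers1
variable {S : Type*}

lemma summable_fin_supp {f : S → ℝ} (h : (Function.support f).Finite) : Summable f :=
  summable_of_ne_finset_zero (s := h.toFinset) (fun b hb => by
    by_contra h0; exact hb (h.mem_toFinset.2 h0))

lemma pmass_eq_sum {p : S → ℝ} {F : Finset S} (hsupp : Function.support p ⊆ ↑F) (A : Set S) :
    pmass p A = ∑ u ∈ F.filter (fun u => u ∈ A), p u := by
  rw [pmass, tsum_subtype]
  rw [tsum_eq_sum (s := F.filter (fun u => u ∈ A)) ?_]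
  · refine Finset.sum_congr rfl fun x hx => ?_
    exact Set.indicator_of_mem (Finset.mem_filter.1 hx).2 p
  · intro b hb
    by_cases hbA : b ∈ A
    · rw [Set.indicator_of_mem hbA]
      by_contra h0
      exact hb (Finset.mem_filter.2 ⟨hsupp h0, hbA⟩)
    · exact Set.indicator_of_notMem hbA p

lemma pmass_mono {q : S → ℝ} (hq0 : ∀ v, 0 ≤ q v) (hfq : (Function.support q).Finite)
    {A B : Set S} (hAB : A ⊆ B) : pmass q A ≤ pmass q B := by
  rw [pmass_eq_sum (F := hfq.toFinset) (by simp) A, pmass_eq_sum (F := hfq.toFinset) (by simp) B]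
  exact Finset.sum_le_sum_of_subset_of_nonneg
    (Finset.monotone_filter_right _ (fun x _ hx => hAB hx)) (fun x _ _ => hq0 x)

lemma integral_ite {a c : ℝ} (h0 : 0 ≤ c) (h1 : c ≤ 1) :
    ∫ x in (0:ℝ)..1, (if x < c then a else 0) = a * c := by
  have he : (fun x : ℝ => if x < c then a else 0) = Set.indicator (Set.Iio c) (fun _ => a) := by
    funext x; by_cases hx : x < c <;> simp [Set.indicator, Set.mem_Iio, hx]
  rw [he, intervalIntegral.integral_of_le zero_le_one,
    MeasureTheory.setIntegral_indicator measurableSet_Iio]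
  have hs : Set.Ioc (0:ℝ) 1 ∩ Set.Iio c = Set.Ioo 0 c := by
    ext x
    simp only [Set.mem_inter_iff, Set.mem_Ioc, Set.mem_Iio, Set.mem_Ioo]
    exact ⟨fun ⟨⟨h0x, _⟩, hxc⟩ => ⟨h0x, hxc⟩, fun ⟨h0x, hxc⟩ => ⟨⟨h0x, le_trans hxc.le h1⟩, hxc⟩⟩
  rw [hs, MeasureTheory.setIntegral_const, Real.volume_real_Ioo_of_le h0, smul_eq_mul]
  ring

lemma ii_ite {a c : ℝ} : IntervalIntegrable (fun x => if x < c then a else 0)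
    MeasureTheory.volume 0 1 := by
  have he : (fun x : ℝ => if x < c then a else 0) = Set.indicator (Set.Iio c) (fun _ => a) := by
    funext x; by_cases hx : x < c <;> simp [Set.indicator, Set.mem_Iio, hx]
  rw [he, intervalIntegrable_iff_integrableOn_Ioc_of_le zero_le_one]
  exact (MeasureTheory.integrableOn_const measure_Ioc_lt_top.ne).indicator
    measurableSet_Iio

lemma ii_sum {F : Finset S} (a c : S → ℝ) :
    IntervalIntegrable (fun x => ∑ u ∈ F, if x < c u then a u else 0)
      MeasureTheory.volume 0 1 := by
  have he : (∑ u ∈ F, fun x : ℝ => if x < c u then a u else 0)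
      = (fun x => ∑ u ∈ F, if x < c u then a u else 0) := by
    funext x; simp
  rw [← he]
  exact IntervalIntegrable.sum F (fun u _ => ii_ite)

lemma sum_eq_integral {F : Finset S} (a c : S → ℝ) (hc0 : ∀ u, 0 ≤ c u) (hc1 : ∀ u, c u ≤ 1) :
    ∑ u ∈ F, a u * c u = ∫ x in (0:ℝ)..1, ∑ u ∈ F, (if x < c u then a u else 0) := by
  rw [intervalIntegral.integral_finset_sum (fun u _ => ii_ite)]
  exact Finset.sum_congr rfl fun u _ => (integral_ite (hc0 u) (hc1 u)).symm

lemma transfer {p q : S → ℝ} (hp : IsDistr p) (hq : IsDistr q)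
    (hfp : (Function.support p).Finite) (hfq : (Function.support q).Finite)
    (R : S → S → Prop) {ε : ℝ} (hε : 0 ≤ ε)
    (hbis : ∀ A : Set S, pmass p A ≤ pmass q (relImg R A) + ε)
    (h k : S → ℝ) (hh0 : ∀ u, 0 ≤ h u) (hh1 : ∀ u, h u ≤ 1)
    (hk0 : ∀ v, 0 ≤ k v) (hk1 : ∀ v, k v ≤ 1)
    (himp : ∀ u v, R u v → h u ≤ k v) :
    ∑' u, p u * h u ≤ (∑' v, q v * k v) + ε := by
  classical
  set Fp := hfp.toFinset with hFp
  set Fq := hfq.toFinset with hFq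
  have hps : Function.support p ⊆ ↑Fp := by simp [hFp]
  have hqs : Function.support q ⊆ ↑Fq := by simp [hFq]
  have hts : ∑' u, p u * h u = ∑ u ∈ Fp, p u * h u := by
    refine tsum_eq_sum fun b hb => ?_
    have : p b = 0 := by
      by_contra h0; exact hb (hfp.mem_toFinset.2 h0)
    rw [this, zero_mul]
  have htq : ∑' v, q v * k v = ∑ v ∈ Fq, q v * k v := by
    refine tsum_eq_sum fun b hb => ?_
    have : q b = 0 := by
      by_contra h0; exact hb (hfq.mem_toFinset.2 h0)
    rw [this, zero_mul]
  rw [hts, htq]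
  rw [sum_eq_integral p h hh0 hh1, sum_eq_integral q k hk0 hk1]
  have hint1 : IntervalIntegrable (fun x => ∑ u ∈ Fp, (if x < h u then p u else 0))
      MeasureTheory.volume 0 1 := ii_sum p h
  have hint2 : IntervalIntegrable (fun x => (∑ v ∈ Fq, (if x < k v then q v else 0)) + ε)
      MeasureTheory.volume 0 1 :=
    (ii_sum q k).add intervalIntegrable_const
  have hpt : ∀ x : ℝ, (∑ u ∈ Fp, (if x < h u then p u else 0)) ≤
      (∑ v ∈ Fq, (if x < k v then q v else 0)) + ε := by
    intro x
    have e1 : (∑ u ∈ Fp, (if x < h u then p u else 0)) = pmass p {u | x < h u} := by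
      rw [pmass_eq_sum hps, Finset.sum_filter]; simp only [Set.mem_setOf_eq]
    have e2 : (∑ v ∈ Fq, (if x < k v then q v else 0)) = pmass q {v | x < k v} := by
      rw [pmass_eq_sum hqs, Finset.sum_filter]; simp only [Set.mem_setOf_eq]
    rw [e1, e2]
    refine le_trans (hbis {u | x < h u}) (add_le_add ?_ le_rfl)
    refine pmass_mono hq.1 hfq ?_
    rintro v ⟨u, hu, huv⟩
    exact lt_of_lt_of_le hu (himp u v huv)
  calc ∫ x in (0:ℝ)..1, ∑ u ∈ Fp, (if x < h u then p u else 0)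
      ≤ ∫ x in (0:ℝ)..1, ((∑ v ∈ Fq, (if x < k v then q v else 0)) + ε) :=
        intervalIntegral.integral_mono_on zero_le_one hint1 hint2 (fun x _ => hpt x)
    _ = (∫ x in (0:ℝ)..1, ∑ v ∈ Fq, (if x < k v then q v else 0)) + ε := by
        rw [intervalIntegral.integral_add (ii_sum q k)
          intervalIntegrable_const, intervalIntegral.integral_const]
        simp

end Helpers1

section Helpers2
variable {S L : Type*} {P : S → S → ℝ} {lab : S → L}

lemma summable_mulP (hfb : ∀ s, (Function.support (P s)).Finite) (s : S) (h : S → ℝ) :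
    Summable (fun t => P s t * h t) :=
  summable_fin_supp ((hfb s).subset (fun t ht => by
    simp only [Function.mem_support] at ht ⊢
    intro h0; apply ht; rw [h0, zero_mul]))

lemma reachLe_succ (G : Set S) (k : ℕ) (s : S) :
    reachLe P G (k+1) s = if s ∈ G then 1 else ∑' t, P s t * reachLe P G k t := rfl

lemma reachLe_zero (G : Set S) (s : S) :
    reachLe P G 0 s = if s ∈ G then 1 else 0 := rfl

lemma reachLe_nonneg (hP : ∀ s, IsDistr (P s)) (G : Set S) :
    ∀ k s, 0 ≤ reachLe P G k s := by
  intro k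
  induction k with
  | zero =>
    intro s; rw [reachLe_zero]; split <;> norm_num
  | succ k ih =>
    intro s; rw [reachLe_succ]; split
    · norm_num
    · exact tsum_nonneg fun t => mul_nonneg ((hP s).1 t) (ih t)

lemma Psum_one (hP : ∀ s, IsDistr (P s)) (s : S) : ∑' t, P s t = 1 := (hP s).2.2.tsum_eq

lemma reachLe_le_one (hP : ∀ s, IsDistr (P s)) (hfb : ∀ s, (Function.support (P s)).Finite)
    (G : Set S) : ∀ k s, reachLe P G k s ≤ 1 := by
  intro k
  induction k with
  | zero => intro s; rw [reachLe_zero]; split <;> norm_num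
  | succ k ih =>
    intro s; rw [reachLe_succ]; split
    · norm_num
    · calc ∑' t, P s t * reachLe P G k t ≤ ∑' t, P s t :=
          Summable.tsum_le_tsum (fun t => mul_le_of_le_one_right ((hP s).1 t) (ih t))
            (summable_mulP hfb s _) (hP s).2.2.summable
        _ = 1 := Psum_one hP s

lemma g_one (G : Set S) (k : ℕ) (s : S) (hs : s ∈ G) : reachLe P G k s = 1 := by
  cases k
  · rw [reachLe_zero, if_pos hs]
  · rw [reachLe_succ, if_pos hs]

lemma f_dead {g f : L} (hgf : g ≠ f)
    (hf : ∀ s, lab s = f ↔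
      ¬ ∃ u, Relation.ReflTransGen (fun a b => P a b ≠ 0) s u ∧ lab u = g) :
    ∀ k s, lab s = f → reachLe P {u | lab u = g} k s = 0 := by
  have hnG : ∀ s : S, lab s = f → s ∉ {u | lab u = g} := by
    intro s hs hg
    exact hgf ((hg : lab s = g) ▸ hs ▸ rfl : g = f)
  intro k
  induction k with
  | zero => intro s hs; rw [reachLe_zero, if_neg (hnG s hs)]
  | succ k ih =>
    intro s hs
    rw [reachLe_succ, if_neg (hnG s hs)]
    have hz : ∀ t, P s t * reachLe P {u | lab u = g} k t = 0 := by
      intro t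
      by_cases h0 : P s t = 0
      · rw [h0, zero_mul]
      · have ht : lab t = f := by
          rw [hf t]
          rintro ⟨u, hru, hug⟩
          exact (hf s).1 hs ⟨u, Relation.ReflTransGen.head h0 hru, hug⟩
        rw [ih t ht, mul_zero]
    calc ∑' t, P s t * reachLe P {u | lab u = g} k t = ∑' _t : S, (0:ℝ) := tsum_congr hz
      _ = 0 := tsum_zero

lemma step_q (hP : ∀ s, IsDistr (P s)) (hfb : ∀ s, (Function.support (P s)).Finite)
    (GF : Set S) {s : S} (hs : s ∉ GF) (j : ℕ) :
    ∑' u, P s u * (1 - reachLe P GF j u) = 1 - reachLe P GF (j+1) s := by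
  have h1 : ∀ u, P s u * (1 - reachLe P GF j u) = P s u - P s u * reachLe P GF j u :=
    fun u => by ring
  rw [tsum_congr h1, Summable.tsum_sub (hP s).2.2.summable (summable_mulP hfb s _), Psum_one hP s,
    reachLe_succ, if_neg hs]

lemma step_C (hP : ∀ s, IsDistr (P s)) (hfb : ∀ s, (Function.support (P s)).Finite)
    (GF : Set S) {s : S} (hs : s ∉ GF) (k : ℕ) :
    ∑' u, P s u * (∑ j ∈ Finset.range k, (1 - reachLe P GF j u)) =
      ∑ j ∈ Finset.range k, (1 - reachLe P GF (j+1) s) := by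
  have h1 : ∀ u, P s u * (∑ j ∈ Finset.range k, (1 - reachLe P GF j u)) =
      ∑ j ∈ Finset.range k, P s u * (1 - reachLe P GF j u) := fun u => Finset.mul_sum _ _ _
  rw [tsum_congr h1, Summable.tsum_finsetSum (fun j _ => summable_mulP hfb s _)]
  exact Finset.sum_congr rfl fun j _ => step_q hP hfb GF hs j

lemma invariant (hP : ∀ s, IsDistr (P s)) (hfb : ∀ s, (Function.support (P s)).Finite)
    {ε : ℝ} (hε : 0 ≤ ε) (g f : L) (hgf : g ≠ f)
    (hf : ∀ s, lab s = f ↔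
      ¬ ∃ u, Relation.ReflTransGen (fun a b => P a b ≠ 0) s u ∧ lab u = g)
    {R : S → S → Prop} (hR : IsEpsBisim P lab ε R) :
    ∀ (k : ℕ) (s t : S), R s t →
      (reachLe P {u | lab u = g} k s - reachLe P {u | lab u = g} k t ≤
        ε * ∑ j ∈ Finset.range k, (1 - reachLe P {u | lab u = g ∨ lab u = f} j s)) ∧
      (reachLe P {u | lab u = g} k s - reachLe P {u | lab u = g} k t ≤
        ε * ∑ j ∈ Finset.range k, (1 - reachLe P {u | lab u = g ∨ lab u = f} j t)) := by
  set G := {u | lab u = g} with hG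
  set GF := {u | lab u = g ∨ lab u = f} with hGF
  have hCpos : ∀ (n : ℕ) (u : S), 0 ≤ ∑ j ∈ Finset.range n, (1 - reachLe P GF j u) :=
    fun n u => Finset.sum_nonneg fun j _ => by
      have := reachLe_le_one hP hfb GF j u; linarith
  intro k
  induction k with
  | zero =>
    intro s t hst
    have hl : lab s = lab t := (hR.2.2 s t hst).1
    have heq : reachLe P G 0 s = reachLe P G 0 t := by
      rw [reachLe_zero, reachLe_zero]
      by_cases hs : s ∈ G
      · rw [if_pos hs, if_pos (show t ∈ G from by
          show lab t = g; rw [← hl]; exact hs)]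
      · rw [if_neg hs, if_neg (show t ∉ G from fun h => hs (by
          show lab s = g
          rw [hl]; exact h))]
    simp [heq]
  | succ k ih =>
    intro s t hst
    have hl : lab s = lab t := (hR.2.2 s t hst).1
    by_cases hsg : lab s = g
    · have h1 : reachLe P G (k+1) s = 1 := g_one G _ s hsg
      have h2 : reachLe P G (k+1) t = 1 := g_one G _ t (hl.symm.trans hsg)
      constructor <;>
        · rw [h1, h2]
          have := hCpos (k+1)
          simp only [sub_self]
          exact mul_nonneg hε (by first | exact this s | exact this t)
    by_cases hsf : lab s = f
    · have h1 : reachLe P G (k+1) s = 0 := f_dead hgf hf _ s hsf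
      have h2 : reachLe P G (k+1) t = 0 := f_dead hgf hf _ t (hl.symm.trans hsf)
      constructor <;>
        · rw [h1, h2]
          have := hCpos (k+1)
          simp only [sub_self]
          exact mul_nonneg hε (by first | exact this s | exact this t)
    -- main case
    have htg : lab t ≠ g := fun h => hsg (hl.trans h)
    have htf : lab t ≠ f := fun h => hsf (hl.trans h)
    have hsG : s ∉ G := hsg
    have htG : t ∉ G := htg
    have hsGF : s ∉ GF := fun h => Or.elim h hsg hsf
    have htGF : t ∉ GF := fun h => Or.elim h htg htf
    have hq0s : reachLe P GF 0 s = 0 := by rw [reachLe_zero, if_neg hsGF]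
    have hq0t : reachLe P GF 0 t = 0 := by rw [reachLe_zero, if_neg htGF]
    have hr0 := reachLe_nonneg hP G k
    have hr1 := reachLe_le_one hP hfb G k
    -- notation
    set r : S → ℝ := reachLe P G k with hr
    set C : S → ℝ := fun u => ∑ j ∈ Finset.range k, (1 - reachLe P GF j u) with hC
    have hC0 : ∀ u, 0 ≤ C u := hCpos k
    constructor
    · -- first-argument form
      have key1 : ∑' v, P t v * (1 - r v) ≤
          (∑' u, P s u * min (1 - r u + ε * C u) 1) + ε := by
        refine transfer (hP t) (hP s) (hfb t) (hfb s) R hε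
          (fun A => (hR.2.2 t s (hR.2.1 hst)).2 A)
          _ _ (fun v => by have := hr1 v; linarith) (fun v => by have := hr0 v; linarith)
          (fun u => le_min (by have := hr1 u; have := mul_nonneg hε (hC0 u); linarith)
            zero_le_one)
          (fun u => min_le_right _ _) ?_
        intro v u hvu
        have h1 : r u - r v ≤ ε * C u := (ih u v (hR.2.1 hvu)).1
        refine le_min (by linarith) (by have := hr0 v; linarith)
      have hL : ∑' v, P t v * (1 - r v) = 1 - reachLe P G (k+1) t := step_q hP hfb G htG k
      have hR2 : ∑' u, P s u * min (1 - r u + ε * C u) 1 ≤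
          ∑' u, P s u * (1 - r u + ε * C u) := by
        refine Summable.tsum_le_tsum (fun u => mul_le_mul_of_nonneg_left (min_le_left _ _) ((hP s).1 u))
          (summable_mulP hfb s _) (summable_mulP hfb s _)
      have hsplit : ∑' u, P s u * (1 - r u + ε * C u) =
          (1 - reachLe P G (k+1) s) + ε * ∑ j ∈ Finset.range k, (1 - reachLe P GF (j+1) s) := by
        have h1 : ∀ u, P s u * (1 - r u + ε * C u) =
            P s u * (1 - r u) + ε * (P s u * C u) := fun u => by ring
        rw [tsum_congr h1, Summable.tsum_add (summable_mulP hfb s _)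
          ((summable_mulP hfb s _).mul_left ε), step_q hP hfb G hsG k,
          Summable.tsum_mul_left ε (summable_mulP hfb s _), step_C hP hfb GF hsGF k]
      have hCs : ∑ j ∈ Finset.range (k+1), (1 - reachLe P GF j s) =
          (∑ j ∈ Finset.range k, (1 - reachLe P GF (j+1) s)) + 1 := by
        rw [Finset.sum_range_succ' (fun j => 1 - reachLe P GF j s) k, hq0s]; ring
      rw [hCs]
      have := key1.trans (by linarith [hR2, hsplit] : (∑' u, P s u * min (1 - r u + ε * C u) 1) + ε ≤
        (1 - reachLe P G (k+1) s) + ε * ∑ j ∈ Finset.range k, (1 - reachLe P GF (j+1) s) + ε)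
      rw [hL] at this
      linarith
    · -- second-argument form
      have key2 : ∑' u, P s u * r u ≤ (∑' v, P t v * min (r v + ε * C v) 1) + ε := by
        refine transfer (hP s) (hP t) (hfb s) (hfb t) R hε
          (fun A => (hR.2.2 s t hst).2 A)
          _ _ (fun u => hr0 u) (fun u => hr1 u)
          (fun v => le_min (by have := hr0 v; have := mul_nonneg hε (hC0 v); linarith)
            zero_le_one)
          (fun v => min_le_right _ _) ?_
        intro u v huv
        have h1 : r u - r v ≤ ε * C v := (ih u v huv).2
        refine le_min (by linarith) (hr1 u)
      have hLs : reachLe P G (k+1) s = ∑' u, P s u * r u := by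
        rw [reachLe_succ, if_neg hsG]
      have hR2 : ∑' v, P t v * min (r v + ε * C v) 1 ≤ ∑' v, P t v * (r v + ε * C v) :=
        Summable.tsum_le_tsum (fun v => mul_le_mul_of_nonneg_left (min_le_left _ _) ((hP t).1 v))
          (summable_mulP hfb t _) (summable_mulP hfb t _)
      have hsplit : ∑' v, P t v * (r v + ε * C v) =
          reachLe P G (k+1) t + ε * ∑ j ∈ Finset.range k, (1 - reachLe P GF (j+1) t) := by
        have h1 : ∀ v, P t v * (r v + ε * C v) = P t v * r v + ε * (P t v * C v) :=
          fun v => by ring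
        rw [tsum_congr h1, Summable.tsum_add (summable_mulP hfb t _)
          ((summable_mulP hfb t _).mul_left ε),
          Summable.tsum_mul_left ε (summable_mulP hfb t _), step_C hP hfb GF htGF k]
        rw [reachLe_succ, if_neg htG]
      have hCt : ∑ j ∈ Finset.range (k+1), (1 - reachLe P GF j t) =
          (∑ j ∈ Finset.range k, (1 - reachLe P GF (j+1) t)) + 1 := by
        rw [Finset.sum_range_succ' (fun j => 1 - reachLe P GF j t) k, hq0t]; ring
      rw [hLs, hCt]
      linarith [key2, hR2, hsplit]

end Helpers2

section Helpers3
variable {S : Type*} [Nonempty S] {P : S → S → ℝ}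

lemma uw_nil (G : Set S) (s : S) :
    untilWeight P Set.univ G s [] = if s ∈ G then 1 else 0 := rfl

lemma uw_cons (G : Set S) (s t : S) (l : List S) :
    untilWeight P Set.univ G s (t :: l) =
      if s ∈ G then 0 else P s t * untilWeight P Set.univ G t l := by
  simp [untilWeight]

lemma uw_nonneg (hP : ∀ s, IsDistr (P s)) (G : Set S) :
    ∀ (l : List S) (s : S), 0 ≤ untilWeight P Set.univ G s l := by
  intro l
  induction l with
  | nil => intro s; rw [uw_nil]; split <;> norm_num
  | cons t l ih =>
    intro s; rw [uw_cons]; split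
    · norm_num
    · exact mul_nonneg ((hP s).1 t) (ih t)

lemma sum_uw_le (hP : ∀ s, IsDistr (P s)) (hfb : ∀ s, (Function.support (P s)).Finite)
    (G : Set S) :
    ∀ (k : ℕ) (u : Finset (List S)), (∀ l ∈ u, l.length ≤ k) → ∀ s,
      ∑ l ∈ u, untilWeight P Set.univ G s l ≤ reachLe P G k s := by
  intro k
  induction k with
  | zero =>
    intro u hu s
    have hsub : u ⊆ {[]} := by
      intro l hl
      have := hu l hl
      simp only [Finset.mem_singleton]
      exact List.length_eq_zero_iff.1 (Nat.le_zero.1 this)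
    calc ∑ l ∈ u, untilWeight P Set.univ G s l
        ≤ ∑ l ∈ ({[]} : Finset (List S)), untilWeight P Set.univ G s l :=
          Finset.sum_le_sum_of_subset_of_nonneg hsub (fun l _ _ => uw_nonneg hP G l s)
      _ = untilWeight P Set.univ G s [] := Finset.sum_singleton _ _
      _ = reachLe P G 0 s := by rw [uw_nil, reachLe_zero]
  | succ k ih =>
    intro u hu s
    by_cases hs : s ∈ G
    · rw [reachLe_succ, if_pos hs]
      have hle : ∀ l ∈ u, untilWeight P Set.univ G s l ≤ if l = [] then 1 else 0 := by
        intro l _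
        cases l with
        | nil => rw [uw_nil, if_pos hs]; simp
        | cons t l => rw [uw_cons, if_pos hs]; simp
      calc ∑ l ∈ u, untilWeight P Set.univ G s l
          ≤ ∑ l ∈ u, (if l = [] then (1:ℝ) else 0) := Finset.sum_le_sum hle
        _ = if ([] : List S) ∈ u then 1 else 0 := by rw [Finset.sum_ite_eq' u ([]) (fun _ => (1:ℝ))]
        _ ≤ 1 := by split <;> norm_num
    · haveI : Inhabited S := Classical.inhabited_of_nonempty ‹_›
      rw [reachLe_succ, if_neg hs]
      set v := u.filter (fun l => l ≠ []) with hv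
      have h0 : untilWeight P Set.univ G s [] = 0 := by rw [uw_nil, if_neg hs]
      have hsum_v : ∑ l ∈ u, untilWeight P Set.univ G s l
          = ∑ l ∈ v, untilWeight P Set.univ G s l := by
        refine (Finset.sum_filter_of_ne ?_).symm
        intro l _ hne
        intro hnil
        rw [hnil] at hne; exact hne h0
      rw [hsum_v]
      -- reindex nonempty lists as (head, tail) pairs
      set e : List S → S × List S := fun l => (l.headI, l.tail) with he
      have hinj : ∀ x ∈ v, ∀ y ∈ v, e x = e y → x = y := by
        intro x hx y hy hxy
        have hxne : x ≠ [] := (Finset.mem_filter.1 hx).2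
        have hyne : y ≠ [] := (Finset.mem_filter.1 hy).2
        cases x with
        | nil => exact absurd rfl hxne
        | cons a xs =>
          cases y with
          | nil => exact absurd rfl hyne
          | cons b ys =>
            simp only [e, List.headI_cons, List.tail_cons, Prod.mk.injEq] at hxy
            rw [hxy.1, hxy.2]
      have himg : ∑ p ∈ v.image e, P s p.1 * untilWeight P Set.univ G p.1 p.2
          = ∑ l ∈ v, untilWeight P Set.univ G s l := by
        rw [Finset.sum_image hinj]
        refine Finset.sum_congr rfl fun l hl => ?_
        have hlne : l ≠ [] := (Finset.mem_filter.1 hl).2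
        cases l with
        | nil => exact absurd rfl hlne
        | cons a xs =>
          simp only [e, List.headI_cons, List.tail_cons]
          rw [uw_cons, if_neg hs]
      rw [← himg]
      set pv := v.image e with hpv
      have hfib : ∑ p ∈ pv, P s p.1 * untilWeight P Set.univ G p.1 p.2
          = ∑ y ∈ pv.image Prod.fst, ∑ p ∈ pv.filter (fun p => p.1 = y),
              P s p.1 * untilWeight P Set.univ G p.1 p.2 :=
        (Finset.sum_fiberwise_of_maps_to (fun p hp => Finset.mem_image_of_mem Prod.fst hp) _).symm
      rw [hfib]
      have hbound : ∀ y ∈ pv.image Prod.fst,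
          ∑ p ∈ pv.filter (fun p => p.1 = y), P s p.1 * untilWeight P Set.univ G p.1 p.2
          ≤ P s y * reachLe P G k y := by
        intro y _
        have hcong : ∑ p ∈ pv.filter (fun p => p.1 = y), P s p.1 * untilWeight P Set.univ G p.1 p.2
            = ∑ p ∈ pv.filter (fun p => p.1 = y), P s y * untilWeight P Set.univ G y p.2 := by
          refine Finset.sum_congr rfl fun p hp => ?_
          have : p.1 = y := (Finset.mem_filter.1 hp).2
          rw [this]
        rw [hcong]
        have hinj2 : ∀ x ∈ pv.filter (fun p => p.1 = y), ∀ z ∈ pv.filter (fun p => p.1 = y),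
            x.2 = z.2 → x = z := by
          intro x hx z hz hxz
          have hx1 : x.1 = y := (Finset.mem_filter.1 hx).2
          have hz1 : z.1 = y := (Finset.mem_filter.1 hz).2
          exact Prod.ext (hx1.trans hz1.symm) hxz
        have himg2 : ∑ l ∈ (pv.filter (fun p => p.1 = y)).image Prod.snd,
            untilWeight P Set.univ G y l
            = ∑ p ∈ pv.filter (fun p => p.1 = y), untilWeight P Set.univ G y p.2 :=
          Finset.sum_image hinj2
        have hlen : ∀ l ∈ (pv.filter (fun p => p.1 = y)).image Prod.snd, l.length ≤ k := by
          intro l hl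
          obtain ⟨p, hp, rfl⟩ := Finset.mem_image.1 hl
          obtain ⟨l', hl', rfl⟩ := Finset.mem_image.1 (Finset.mem_filter.1 hp).1
          have hne : l' ≠ [] := (Finset.mem_filter.1 hl').2
          have hlen' : l'.length ≤ k + 1 := hu l' (Finset.mem_filter.1 hl').1
          cases l' with
          | nil => exact absurd rfl hne
          | cons a xs =>
            simp only [e, List.tail_cons]
            have : xs.length + 1 ≤ k + 1 := by simpa using hlen'
            omega
        calc ∑ p ∈ pv.filter (fun p => p.1 = y), P s y * untilWeight P Set.univ G y p.2
            = P s y * ∑ p ∈ pv.filter (fun p => p.1 = y), untilWeight P Set.univ G y p.2 :=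
              (Finset.mul_sum _ _ _).symm
          _ ≤ P s y * reachLe P G k y := by
              refine mul_le_mul_of_nonneg_left ?_ ((hP s).1 y)
              rw [← himg2]
              exact ih _ hlen y
      calc ∑ y ∈ pv.image Prod.fst, ∑ p ∈ pv.filter (fun p => p.1 = y),
              P s p.1 * untilWeight P Set.univ G p.1 p.2
          ≤ ∑ y ∈ pv.image Prod.fst, P s y * reachLe P G k y := Finset.sum_le_sum hbound
        _ ≤ ∑' t, P s t * reachLe P G k t := by
            refine Summable.sum_le_tsum _ (fun t _ => mul_nonneg ((hP s).1 t) (reachLe_nonneg hP G k t))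
              (summable_mulP hfb s _)

lemma summable_uw (hP : ∀ s, IsDistr (P s)) (hfb : ∀ s, (Function.support (P s)).Finite)
    (G : Set S) (s : S) : Summable (fun l => untilWeight P Set.univ G s l) := by
  refine summable_of_sum_le (c := 1) (fun l => uw_nonneg hP G l s) (fun u => ?_)
  calc ∑ l ∈ u, untilWeight P Set.univ G s l
      ≤ reachLe P G (u.sup List.length) s :=
        sum_uw_le hP hfb G _ u (fun l hl => Finset.le_sup hl) s
    _ ≤ 1 := reachLe_le_one hP hfb G _ s

lemma cons_inj : Function.Injective (fun p : S × List S => p.1 :: p.2) := by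
  intro p q h
  simp only [List.cons.injEq] at h
  exact Prod.ext h.1 h.2

lemma reachLe_le_untilProb (hP : ∀ s, IsDistr (P s))
    (hfb : ∀ s, (Function.support (P s)).Finite) (G : Set S) :
    ∀ (k : ℕ) (s : S), reachLe P G k s ≤ untilProb P Set.univ G s := by
  intro k
  induction k with
  | zero =>
    intro s
    rw [reachLe_zero]
    by_cases hs : s ∈ G
    · rw [if_pos hs]
      have h1 : untilWeight P Set.univ G s [] = 1 := by rw [uw_nil, if_pos hs]
      calc (1:ℝ) = untilWeight P Set.univ G s [] := h1.symm
        _ ≤ untilProb P Set.univ G s :=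
          Summable.le_tsum (summable_uw hP hfb G s) [] (fun l _ => uw_nonneg hP G l s)
    · rw [if_neg hs]
      exact tsum_nonneg (fun l => uw_nonneg hP G l s)
  | succ k ih =>
    intro s
    rw [reachLe_succ]
    by_cases hs : s ∈ G
    · rw [if_pos hs]
      have h1 : untilWeight P Set.univ G s [] = 1 := by rw [uw_nil, if_pos hs]
      calc (1:ℝ) = untilWeight P Set.univ G s [] := h1.symm
        _ ≤ untilProb P Set.univ G s :=
          Summable.le_tsum (summable_uw hP hfb G s) [] (fun l _ => uw_nonneg hP G l s)
    · rw [if_neg hs]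
      have hsum_g : Summable (fun p : S × List S => untilWeight P Set.univ G s (p.1 :: p.2)) :=
        (summable_uw hP hfb G s).comp_injective cons_inj
      have hgeq : ∀ p : S × List S, untilWeight P Set.univ G s (p.1 :: p.2)
          = P s p.1 * untilWeight P Set.univ G p.1 p.2 := by
        intro p; rw [uw_cons, if_neg hs]
      calc ∑' t, P s t * reachLe P G k t
          ≤ ∑' t, P s t * untilProb P Set.univ G t := by
            refine Summable.tsum_le_tsum (fun t => mul_le_mul_of_nonneg_left (ih t) ((hP s).1 t))
              (summable_mulP hfb s _) (summable_mulP hfb s _)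
        _ = ∑' t, ∑' l, P s t * untilWeight P Set.univ G t l := by
            refine tsum_congr fun t => ?_
            rw [untilProb, ← Summable.tsum_mul_left (P s t) (summable_uw hP hfb G t)]
        _ = ∑' p : S × List S, untilWeight P Set.univ G s (p.1 :: p.2) := by
            rw [Summable.tsum_prod' hsum_g (fun t => by
              have he2 : (fun c => untilWeight P Set.univ G s (t :: c))
                  = fun c => P s t * untilWeight P Set.univ G t c :=
                funext fun c => hgeq (t, c)
              rw [he2]
              exact (summable_uw hP hfb G t).mul_left (P s t))]
            exact tsum_congr fun t => tsum_congr fun l => (hgeq (t, l)).symm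
        _ ≤ ∑' l, untilWeight P Set.univ G s l := by
            refine Summable.tsum_le_tsum_of_inj (fun p : S × List S => p.1 :: p.2) cons_inj
              (fun l _ => uw_nonneg hP G l s) (fun p => le_rfl) hsum_g
              (summable_uw hP hfb G s)
            
        _ = untilProb P Set.univ G s := rfl

lemma reachLe_mono (hP : ∀ s, IsDistr (P s)) (hfb : ∀ s, (Function.support (P s)).Finite)
    (G : Set S) : ∀ (k : ℕ) (s : S), reachLe P G k s ≤ reachLe P G (k+1) s := by
  intro k
  induction k with
  | zero =>
    intro s
    rw [reachLe_zero, reachLe_succ]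
    by_cases hs : s ∈ G
    · rw [if_pos hs, if_pos hs]
    · rw [if_neg hs, if_neg hs]
      exact tsum_nonneg fun t => mul_nonneg ((hP s).1 t) (reachLe_nonneg hP G 0 t)
  | succ k ih =>
    intro s
    rw [reachLe_succ, reachLe_succ]
    by_cases hs : s ∈ G
    · rw [if_pos hs, if_pos hs]
    · rw [if_neg hs, if_neg hs]
      exact Summable.tsum_le_tsum (fun t => mul_le_mul_of_nonneg_left (ih t) ((hP s).1 t))
        (summable_mulP hfb s _) (summable_mulP hfb s _)

lemma tendsto_reachLe (hP : ∀ s, IsDistr (P s))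
    (hfb : ∀ s, (Function.support (P s)).Finite) (G : Set S) (s : S) :
    Filter.Tendsto (fun k => reachLe P G k s) Filter.atTop
      (nhds (untilProb P Set.univ G s)) := by
  have hmono : Monotone (fun k => reachLe P G k s) :=
    monotone_nat_of_le_succ (fun k => reachLe_mono hP hfb G k s)
  have hbdd : BddAbove (Set.range (fun k => reachLe P G k s)) := by
    refine ⟨1, ?_⟩
    rintro x ⟨k, rfl⟩
    exact reachLe_le_one hP hfb G k s
  have ht := tendsto_atTop_ciSup hmono hbdd
  have heq : (⨆ k, reachLe P G k s) = untilProb P Set.univ G s := by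
    apply le_antisymm
    · exact ciSup_le (fun k => reachLe_le_untilProb hP hfb G k s)
    · refine le_of_tendsto (summable_uw hP hfb G s).hasSum
        (Filter.Eventually.of_forall fun u => ?_)
      calc ∑ l ∈ u, untilWeight P Set.univ G s l
          ≤ reachLe P G (u.sup List.length) s :=
            sum_uw_le hP hfb G _ u (fun l hl => Finset.le_sup hl) s
        _ ≤ ⨆ k, reachLe P G k s := le_ciSup hbdd _
  rwa [heq] at ht

end Helpers3

end URB

open URB in
theorem unbounded_reach_bound {S L : Type*} [Countable S] [Nonempty S]
    (P : S → S → ℝ) (lab : S → L)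
    (hP : ∀ s, IsDistr (P s)) (hfb : ∀ s, (Function.support (P s)).Finite)
    (ε : ℝ) (hε : 0 ≤ ε) (g f : L) (hgf : g ≠ f)
    (hg : ∃ s, lab s = g)
    (hf : ∀ s, lab s = f ↔
      ¬ ∃ u, Relation.ReflTransGen (fun a b => P a b ≠ 0) s u ∧ lab u = g)
    (s t : S) (hst : ∃ R, IsEpsBisim P lab ε R ∧ R s t) :
    (∀ k : ℕ,
      |reachLe P {u | lab u = g} k s - reachLe P {u | lab u = g} k t| ≤
        ε * ∑ j ∈ Finset.range k, (1 - reachLe P {u | lab u = g ∨ lab u = f} j s)) ∧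
    (∀ E : ℝ,
      HasSum (fun j : ℕ => 1 - reachLe P {u | lab u = g ∨ lab u = f} j s) E →
      |untilProb P Set.univ {u | lab u = g} s -
        untilProb P Set.univ {u | lab u = g} t| ≤ ε * E) := by
  obtain ⟨R, hR, hst⟩ := hst
  have inv := invariant hP hfb hε g f hgf hf hR
  have part1 : ∀ k : ℕ, |reachLe P {u | lab u = g} k s - reachLe P {u | lab u = g} k t| ≤
      ε * ∑ j ∈ Finset.range k, (1 - reachLe P {u | lab u = g ∨ lab u = f} j s) := by
    intro k
    rw [abs_sub_le_iff]
    exact ⟨(inv k s t hst).1, (inv k t s (hR.2.1 hst)).2⟩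
  refine ⟨part1, ?_⟩
  intro E hE
  have hbound : ∀ k : ℕ,
      |reachLe P {u | lab u = g} k s - reachLe P {u | lab u = g} k t| ≤ ε * E := by
    intro k
    refine (part1 k).trans (mul_le_mul_of_nonneg_left ?_ hε)
    exact sum_le_hasSum (Finset.range k) (fun j _ => by
      have := reachLe_le_one hP hfb {u | lab u = g ∨ lab u = f} j s; linarith) hE
  have hts := tendsto_reachLe hP hfb {u | lab u = g} s
  have htt := tendsto_reachLe hP hfb {u | lab u = g} t
  have habs : Filter.Tendsto
      (fun k => |reachLe P {u | lab u = g} k s - reachLe P {u | lab u = g} k t|)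
      Filter.atTop
      (nhds (|untilProb P Set.univ {u | lab u = g} s -
        untilProb P Set.univ {u | lab u = g} t|)) :=
    (hts.sub htt).abs
  exact le_of_tendsto habs (Filter.Eventually.of_forall hbound)
end

section
/- There exist a finitely branching LMC and two ε-bisimilar states s, t in it such that |Pr_s(◇ g) − Pr_t(◇ g)| = ε · 𝔼_s(N), i.e., the bound |Pr_s(◇ g) − Pr_t(◇ g)| ≤ ε·𝔼_s(N) is tight. Concretely, for p ∈ (0,1) and 0 < ε < p/2, take the five-state LMC with states s, q, r, t (with q labeled g, r labeled f, s and t labeled a) where P(s)(s) = 1−p, P(s)(q) = p/2, P(s)(r) = p/2, P(t)(t) = 1−p, P(t)(q) = p/2 − ε, P(t)(r) = p/2 + ε, and q, r absorbing. Then s ∼_ε t, Pr_s(◇g) = 1/2, Pr_t(◇g) = 1/2 − ε/p, and 𝔼_s(N) = 1/p. -/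
open scoped BigOperators

attribute [local instance] Classical.propDecidable

/-! ### Auxiliary material for the tightness construction -/

lemma pmass_fintype {S : Type*} [Fintype S] (μ : S → ℝ) (A : Set S) :
    pmass μ A = ∑ x, if x ∈ A then μ x else 0 := by
  rw [pmass, tsum_subtype, tsum_fintype]
  simp [Set.indicator]

def idx (u : Fin 4) (k : ℕ) : List (Fin 4) := List.replicate k u ++ [1]

lemma idx_inj (u : Fin 4) : Function.Injective (idx u) := by
  intro a b h
  have := congrArg List.length h
  simpa [idx] using this

lemma idx_cons (u : Fin 4) (k : ℕ) : idx u (k + 1) = u :: idx u k := by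
  simp [idx, List.replicate_succ]

section geom
variable (P : Fin 4 → Fin 4 → ℝ)

lemma W2 (h2 : ∀ v, v ≠ 2 → P 2 v = 0) :
    ∀ l, untilWeight P Set.univ ({1} : Set (Fin 4)) 2 l = 0
  | [] => by simp [untilWeight]
  | (t :: l) => by
      by_cases ht : t = 2
      · subst ht
        simp [untilWeight, W2 h2 l]
      · simp [untilWeight, h2 t ht]

lemma Wu_vanish (u : Fin 4) (hu1 : u ≠ 1) (hu2 : u ≠ 2)
    (h0 : ∀ v, v ≠ u → v ≠ 1 → v ≠ 2 → P u v = 0)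
    (h2 : ∀ v, v ≠ 2 → P 2 v = 0) :
    ∀ l, l ∉ Set.range (idx u) → untilWeight P Set.univ ({1} : Set (Fin 4)) u l = 0
  | [], _ => by simp [untilWeight, hu1]
  | (t :: l), h => by
      have hW : untilWeight P Set.univ ({1} : Set (Fin 4)) u (t :: l)
          = P u t * untilWeight P Set.univ ({1} : Set (Fin 4)) t l := by
        simp [untilWeight, hu1]
      rw [hW]
      by_cases htu : t = u
      · subst htu
        have hl : l ∉ Set.range (idx t) := by
          rintro ⟨k, rfl⟩
          exact h ⟨k + 1, (idx_cons t k).symm⟩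
        rw [Wu_vanish t hu1 hu2 h0 h2 l hl, mul_zero]
      · by_cases ht1 : t = 1
        · subst ht1
          cases l with
          | nil => exact absurd ⟨0, rfl⟩ h
          | cons a m => simp [untilWeight]
        · by_cases ht2 : t = 2
          · subst ht2
            rw [W2 P h2, mul_zero]
          · rw [h0 t htu ht1 ht2, zero_mul]

lemma Wu_val (u : Fin 4) (hu1 : u ≠ 1) :
    ∀ k, untilWeight P Set.univ ({1} : Set (Fin 4)) u (idx u k) = (P u u) ^ k * P u 1
  | 0 => by simp [idx, untilWeight, hu1]
  | (k + 1) => by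
      rw [idx_cons]
      have hW : untilWeight P Set.univ ({1} : Set (Fin 4)) u (u :: idx u k)
          = P u u * untilWeight P Set.univ ({1} : Set (Fin 4)) u (idx u k) := by
        simp [untilWeight, hu1]
      rw [hW, Wu_val u hu1 k]
      ring

lemma untilProb_geom (u : Fin 4) (hu1 : u ≠ 1) (hu2 : u ≠ 2)
    (h0 : ∀ v, v ≠ u → v ≠ 1 → v ≠ 2 → P u v = 0)
    (h2 : ∀ v, v ≠ 2 → P 2 v = 0)
    (ha0 : 0 ≤ P u u) (ha1 : P u u < 1) :
    untilProb P Set.univ ({1} : Set (Fin 4)) u = P u 1 / (1 - P u u) := by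
  have hs : HasSum (fun l => untilWeight P Set.univ ({1} : Set (Fin 4)) u l)
      (P u 1 / (1 - P u u)) := by
    rw [← (idx_inj u).hasSum_iff (fun l hl => Wu_vanish P u hu1 hu2 h0 h2 l hl)]
    have hg := (hasSum_geometric_of_lt_one ha0 ha1).mul_right (P u 1)
    have hfun : ((fun l => untilWeight P Set.univ ({1} : Set (Fin 4)) u l) ∘ idx u)
        = fun k => (P u u) ^ k * P u 1 := funext fun k => Wu_val P u hu1 k
    rw [hfun, div_eq_mul_inv, mul_comm]
    exact hg
  exact hs.tsum_eq

end geom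

/-- The transition matrix of the tightness example. -/
noncomputable def Pc (p ε : ℝ) (a b : Fin 4) : ℝ :=
  if a = 0 then (if b = 0 then 1 - p else if b = 1 then p / 2 else if b = 2 then p / 2 else 0)
  else if a = 1 then (if b = 1 then 1 else 0)
  else if a = 2 then (if b = 2 then 1 else 0)
  else (if b = 1 then p / 2 - ε else if b = 2 then p / 2 + ε else if b = 3 then 1 - p else 0)

/-- The labeling of the tightness example. -/
def labc : Fin 4 → Fin 3 := fun u => if u = 1 then 1 else if u = 2 then 2 else 0

/-- The ε-bisimulation relation of the tightness example. -/
def Rc : Fin 4 → Fin 4 → Prop := fun a b => a = b ∨ (a = 0 ∧ b = 3) ∨ (a = 3 ∧ b = 0)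

lemma relImg_Rc (A : Set (Fin 4)) (x : Fin 4) :
    x ∈ relImg Rc A ↔ x ∈ A ∨ (x = 3 ∧ (0 : Fin 4) ∈ A) ∨ (x = 0 ∧ (3 : Fin 4) ∈ A) := by
  constructor
  · rintro ⟨s, hs, (rfl | ⟨rfl, rfl⟩ | ⟨rfl, rfl⟩)⟩
    · exact Or.inl hs
    · exact Or.inr (Or.inl ⟨rfl, hs⟩)
    · exact Or.inr (Or.inr ⟨rfl, hs⟩)
  · rintro (hx | ⟨rfl, h⟩ | ⟨rfl, h⟩)
    · exact ⟨x, hx, Or.inl rfl⟩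
    · exact ⟨0, h, Or.inr (Or.inl ⟨rfl, rfl⟩)⟩
    · exact ⟨3, h, Or.inr (Or.inr ⟨rfl, rfl⟩)⟩

lemma Rc_bisim (p ε : ℝ) (hp0 : 0 < p) (hp1 : p < 1) (hε0 : 0 < ε) (hεp : ε < p / 2) :
    IsEpsBisim (Pc p ε) labc ε Rc := by
  refine ⟨fun x => Or.inl rfl, ?_, ?_⟩
  · rintro a b (rfl | ⟨rfl, rfl⟩ | ⟨rfl, rfl⟩)
    · exact Or.inl rfl
    · exact Or.inr (Or.inr ⟨rfl, rfl⟩)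
    · exact Or.inr (Or.inl ⟨rfl, rfl⟩)
  · intro s t hst
    have hmass : ∀ (μ : Fin 4 → ℝ) (A : Set (Fin 4)),
        pmass μ A = (if (0:Fin 4) ∈ A then μ 0 else 0) + (if (1:Fin 4) ∈ A then μ 1 else 0)
          + (if (2:Fin 4) ∈ A then μ 2 else 0) + (if (3:Fin 4) ∈ A then μ 3 else 0) := by
      intro μ A; rw [pmass_fintype, Fin.sum_univ_four]
    have hmassI : ∀ (μ : Fin 4 → ℝ) (A : Set (Fin 4)),
        pmass μ (relImg Rc A) =
          (if (0:Fin 4) ∈ A ∨ (3:Fin 4) ∈ A then μ 0 else 0)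
          + (if (1:Fin 4) ∈ A then μ 1 else 0)
          + (if (2:Fin 4) ∈ A then μ 2 else 0)
          + (if (3:Fin 4) ∈ A ∨ (0:Fin 4) ∈ A then μ 3 else 0) := by
      intro μ A
      rw [hmass]
      congr 1
      · congr 1
        · congr 1
          · simp [relImg_Rc] <;> tauto
          · simp [relImg_Rc]
        · simp [relImg_Rc]
      · simp [relImg_Rc] <;> tauto
    have e00 : Pc p ε 0 0 = 1 - p := by simp [Pc]
    have e01 : Pc p ε 0 1 = p / 2 := by simp [Pc]
    have e02 : Pc p ε 0 2 = p / 2 := by simp [Pc]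
    have e03 : Pc p ε 0 3 = 0 := by simp [Pc]
    have e30 : Pc p ε 3 0 = 0 := by simp [Pc]
    have e31 : Pc p ε 3 1 = p / 2 - ε := by simp [Pc]
    have e32 : Pc p ε 3 2 = p / 2 + ε := by simp [Pc]
    have e33 : Pc p ε 3 3 = 1 - p := by simp [Pc]
    rcases hst with rfl | ⟨rfl, rfl⟩ | ⟨rfl, rfl⟩
    · refine ⟨rfl, fun A => ?_⟩
      rw [hmass, hmassI]
      have h0 : ∀ v : Fin 4, 0 ≤ Pc p ε s v := by
        intro v; fin_cases s <;> fin_cases v <;> simp [Pc] <;> linarith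
      by_cases hA0 : (0:Fin 4) ∈ A <;> by_cases hA3 : (3:Fin 4) ∈ A <;>
        simp [hA0, hA3] <;> nlinarith [h0 0, h0 3, hε0]
    · refine ⟨by simp [labc], fun A => ?_⟩
      rw [hmass, hmassI, e00, e01, e02, e03, e30, e31, e32, e33]
      by_cases hA0 : (0:Fin 4) ∈ A <;> by_cases hA1 : (1:Fin 4) ∈ A <;>
        by_cases hA2 : (2:Fin 4) ∈ A <;> by_cases hA3 : (3:Fin 4) ∈ A <;>
        simp [hA0, hA1, hA2, hA3] <;> linarith
    · refine ⟨by simp [labc], fun A => ?_⟩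
      rw [hmass, hmassI, e00, e01, e02, e03, e30, e31, e32, e33]
      by_cases hA0 : (0:Fin 4) ∈ A <;> by_cases hA1 : (1:Fin 4) ∈ A <;>
        by_cases hA2 : (2:Fin 4) ∈ A <;> by_cases hA3 : (3:Fin 4) ∈ A <;>
        simp [hA0, hA1, hA2, hA3] <;> linarith

theorem unbounded_reach_bound_tight (p ε : ℝ)
    (hp0 : 0 < p) (hp1 : p < 1) (hε0 : 0 < ε) (hεp : ε < p / 2) :
    ∃ (S : Type) (_ : Fintype S) (L : Type) (P : S → S → ℝ) (lab : S → L)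
      (g f : L) (s t : S),
      (∀ u, IsDistr (P u)) ∧
      (∃ u, lab u = g) ∧
      (∀ u, lab u = f ↔
        ¬ ∃ v, Relation.ReflTransGen (fun a b => P a b ≠ 0) u v ∧ lab v = g) ∧
      (∃ R, IsEpsBisim P lab ε R ∧ R s t) ∧
      untilProb P Set.univ {u | lab u = g} s = 1 / 2 ∧
      untilProb P Set.univ {u | lab u = g} t = 1 / 2 - ε / p ∧
      HasSum (fun j : ℕ => 1 - reachLe P {u | lab u = g ∨ lab u = f} j s) (1 / p) ∧
      |untilProb P Set.univ {u | lab u = g} s -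
        untilProb P Set.univ {u | lab u = g} t| = ε * (1 / p) := by
  classical
  refine ⟨Fin 4, inferInstance, Fin 3, Pc p ε, labc, 1, 2, 0, 3, ?_, ⟨1, by simp [labc]⟩,
    ?_, ⟨Rc, Rc_bisim p ε hp0 hp1 hε0 hεp, Or.inr (Or.inl ⟨rfl, rfl⟩)⟩, ?_⟩
  · -- distributions
    intro u
    refine ⟨?_, ?_, ?_⟩
    · intro v; fin_cases u <;> fin_cases v <;> simp [Pc] <;> linarith
    · intro v; fin_cases u <;> fin_cases v <;> simp [Pc] <;> linarith
    · have h : ∑ v, Pc p ε u v = 1 := by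
        fin_cases u <;> rw [Fin.sum_univ_four] <;> simp [Pc] <;> ring
      exact h ▸ hasSum_fintype (Pc p ε u)
  · -- characterization of f
    intro u
    have step2 : ∀ v, Relation.ReflTransGen (fun a b => Pc p ε a b ≠ 0) 2 v → v = 2 := by
      intro v hv
      induction hv with
      | refl => rfl
      | tail h1 h2 ih =>
          subst ih
          by_contra hc
          exact h2 (by simp [Pc, hc])
    fin_cases u
    · constructor
      · intro h; exact absurd h (by simp [labc])
      · intro h
        exact absurd ⟨1, Relation.ReflTransGen.single (by simp [Pc]; positivity),
          by simp [labc]⟩ h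
    · constructor
      · intro h; exact absurd h (by simp [labc])
      · intro h
        exact absurd ⟨1, Relation.ReflTransGen.refl, by simp [labc]⟩ h
    · refine ⟨fun _ => ?_, fun _ => by simp [labc]⟩
      rintro ⟨v, hv, hlab⟩
      rw [step2 v hv] at hlab
      exact absurd hlab (by simp [labc])
    · constructor
      · intro h; exact absurd h (by simp [labc])
      · intro h
        refine absurd ⟨1, Relation.ReflTransGen.single ?_, by simp [labc]⟩ h
        show Pc p ε 3 1 ≠ 0
        have h31 : Pc p ε 3 1 = p / 2 - ε := by simp [Pc]
        rw [h31]; intro hc; linarith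
  · -- quantitative facts
    have hA : {u : Fin 4 | labc u = 1} = ({1} : Set (Fin 4)) := by
      ext u; fin_cases u <;> simp [labc]
    have e00 : Pc p ε 0 0 = 1 - p := by simp [Pc]
    have e01 : Pc p ε 0 1 = p / 2 := by simp [Pc]
    have e31 : Pc p ε 3 1 = p / 2 - ε := by simp [Pc]
    have e33 : Pc p ε 3 3 = 1 - p := by simp [Pc]
    have h2abs : ∀ v : Fin 4, v ≠ 2 → Pc p ε 2 v = 0 := by
      intro v hv; simp [Pc, hv]
    have hs0 : untilProb (Pc p ε) Set.univ ({1} : Set (Fin 4)) 0 = 1 / 2 := by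
      rw [untilProb_geom (Pc p ε) 0 (by decide) (by decide)
        (fun v h0 h1 h2 => by fin_cases v <;> simp_all [Pc]) h2abs
        (by rw [e00]; linarith) (by rw [e00]; linarith), e00, e01]
      rw [show 1 - (1 - p) = p by ring]
      field_simp
    have ht3 : untilProb (Pc p ε) Set.univ ({1} : Set (Fin 4)) 3 = 1 / 2 - ε / p := by
      rw [untilProb_geom (Pc p ε) 3 (by decide) (by decide)
        (fun v h0 h1 h2 => by fin_cases v <;> simp_all [Pc]) h2abs
        (by rw [e33]; linarith) (by rw [e33]; linarith), e31, e33]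
      rw [show 1 - (1 - p) = p by ring]
      field_simp
    have hreach : ∀ j : ℕ,
        reachLe (Pc p ε) {u : Fin 4 | labc u = 1 ∨ labc u = 2} j 0 = 1 - (1 - p) ^ j := by
      have hG1 : ∀ j, reachLe (Pc p ε) {u : Fin 4 | labc u = 1 ∨ labc u = 2} j 1 = 1 := by
        intro j; cases j <;> simp [reachLe, labc]
      have hG2 : ∀ j, reachLe (Pc p ε) {u : Fin 4 | labc u = 1 ∨ labc u = 2} j 2 = 1 := by
        intro j; cases j <;> simp [reachLe, labc]
      intro j
      induction j with
      | zero => simp [reachLe, labc]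
      | succ k ih =>
          rw [reachLe]
          have h0 : (0 : Fin 4) ∉ {u : Fin 4 | labc u = 1 ∨ labc u = 2} := by simp [labc]
          have e02 : Pc p ε 0 2 = p / 2 := by simp [Pc]
          have e03 : Pc p ε 0 3 = 0 := by simp [Pc]
          rw [if_neg h0, tsum_fintype, Fin.sum_univ_four, ih, hG1, hG2, e00, e01, e02, e03]
          ring
    rw [hA, hs0, ht3]
    refine ⟨rfl, rfl, ?_, ?_⟩
    · have hfun : (fun j : ℕ => 1 -
          reachLe (Pc p ε) {u : Fin 4 | labc u = 1 ∨ labc u = 2} j 0)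
          = fun j : ℕ => (1 - p) ^ j := funext fun j => by rw [hreach j]; ring
      rw [hfun, show (1 : ℝ) / p = (1 - (1 - p))⁻¹ by rw [show 1 - (1-p) = p by ring, one_div]]
      exact hasSum_geometric_of_lt_one (by linarith) (by linarith)
    · rw [show 1 / 2 - (1 / 2 - ε / p) = ε / p by ring,
        abs_of_pos (by positivity), div_eq_mul_inv, one_div]
end
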